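/- arXiv:0711.0902 — 2 statements merged into one kernel-verified Lean document; each statement's English description precedes it below -/
import Mathlib

section
/- Let μ be a partition of n+k, let (i,j) ∈ μ, and let I^k_{i,j} = {P ∈ ℚ[X_n,Y_n] : P(∂)Q = 0 for all Q ∈ M^k_{i,j}(X,Y)} be the annihilator ideal of M^k_{i,j}(X,Y). Then I^k_{i,j} equals the intersection, over all k-element subsets {(a₁,b₁),…,(a_k,b_k)} of the shadow of (i,j) listed in increasing lexicographic order, of the sets {P ∈ ℚ[X_n,Y_n] : P(∂) annihilates ∂x_{n+1}^{a₁}∂y_{n+1}^{b₁}⋯∂x_{n+k}^{a_k}∂y_{n+k}^{b_k} Δ_μ(X_{n+k};Y_{n+k})}. -/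
open MvPolynomial

noncomputable section

/-- The monomial differential operator `∂^m` applied to a polynomial `Q`:
if `m = (m_v)_v`, this is `∏_v (∂/∂x_v)^{m_v}` applied to `Q`. -/
def monDiff {σ : Type*} [DecidableEq σ] (m : σ →₀ ℕ) (Q : MvPolynomial σ ℚ) :
    MvPolynomial σ ℚ :=
  ∑ a ∈ Q.support,
    MvPolynomial.monomial (a - m) (Q.coeff a * ∏ v ∈ m.support, ((a v).descFactorial (m v) : ℚ))

/-- The differential operator `P(∂)` applied to `Q`. -/
def applyDiff {σ : Type*} [DecidableEq σ] (P Q : MvPolynomial σ ℚ) : MvPolynomial σ ℚ :=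
  ∑ m ∈ P.support, P.coeff m • monDiff m Q

/-- The linear span of `Q` and all its partial derivatives (of all orders),
i.e. the space `L_∂[Q]`. -/
def derivSpan {σ : Type*} [DecidableEq σ] (Q : MvPolynomial σ ℚ) :
    Submodule ℚ (MvPolynomial σ ℚ) :=
  Submodule.span ℚ {R | ∃ m : σ →₀ ℕ, R = monDiff m Q}

/-- Strict pseudo-lexicographic order: compare second coordinates first. -/
def plexLT {α : Type*} [LinearOrder α] (a b : α × α) : Prop :=
  a.2 < b.2 ∨ (a.2 = b.2 ∧ a.1 < b.1)

/-- Pseudo-lexicographic order on `ℕ × ℕ`. -/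
def plexLE (a b : ℕ × ℕ) : Prop :=
  a.2 < b.2 ∨ (a.2 = b.2 ∧ a.1 ≤ b.1)

instance : DecidableRel plexLE := fun a b => by unfold plexLE; exact inferInstance
instance : IsTrans (ℕ × ℕ) plexLE := ⟨by intro a b c hab hbc; unfold plexLE at *; omega⟩
instance : IsAntisymm (ℕ × ℕ) plexLE := ⟨by
  intro a b hab hba
  unfold plexLE at hab hba
  have h1 : a.1 = b.1 := by omega
  have h2 : a.2 = b.2 := by omega
  exact Prod.ext h1 h2⟩
instance : IsTotal (ℕ × ℕ) plexLE := ⟨by intro a b; unfold plexLE; omega⟩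

/-- Lexicographic order on `ℕ × ℕ`: compare first coordinates first. -/
def lexLE (a b : ℕ × ℕ) : Prop :=
  a.1 < b.1 ∨ (a.1 = b.1 ∧ a.2 ≤ b.2)

/-- Strict lexicographic order on `ℕ × ℕ`. -/
def lexLT (a b : ℕ × ℕ) : Prop :=
  a.1 < b.1 ∨ (a.1 = b.1 ∧ a.2 < b.2)

instance : DecidableRel lexLE := fun a b => by unfold lexLE; exact inferInstance
instance : IsTrans (ℕ × ℕ) lexLE := ⟨by intro a b c hab hbc; unfold lexLE at *; omega⟩
instance : IsAntisymm (ℕ × ℕ) lexLE := ⟨by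
  intro a b hab hba
  unfold lexLE at hab hba
  have h1 : a.1 = b.1 := by omega
  have h2 : a.2 = b.2 := by omega
  exact Prod.ext h1 h2⟩
instance : IsTotal (ℕ × ℕ) lexLE := ⟨by intro a b; unfold lexLE; omega⟩

/-- The lattice determinant of a list of `n` biexponents:
`Δ = det(x_i^{p_j} y_i^{q_j})`, in the ring `ℚ[x_1,…,x_n,y_1,…,y_n]`,
where `Sum.inl i` stands for `x_{i+1}` and `Sum.inr i` for `y_{i+1}`. -/
def deltaOfList (n : ℕ) (L : Fin n → ℕ × ℕ) : MvPolynomial (Fin n ⊕ Fin n) ℚ :=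
  Matrix.det (Matrix.of fun i j : Fin n =>
    X (Sum.inl i) ^ (L j).1 * X (Sum.inr i) ^ (L j).2)

/-- The lattice determinant of a lattice diagram (finite set of cells), the cells
being listed in increasing pseudo-lexicographic order; `0` if the diagram does not
have exactly `n` cells. -/
def deltaOfFinset (n : ℕ) (D : Finset (ℕ × ℕ)) : MvPolynomial (Fin n ⊕ Fin n) ℚ :=
  if h : D.card = n then
    deltaOfList n fun i => (D.sort plexLE).get ⟨i.1, by rw [Finset.length_sort, h]; exact i.2⟩
  else 0

open scoped Classical in
/-- The lattice determinant of a list of integer biexponents: `0` if some coordinate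
is negative (and `0` if two biexponents coincide, since then the determinant has two
equal columns). -/
def deltaOfListZ (n : ℕ) (L : Fin n → ℤ × ℤ) : MvPolynomial (Fin n ⊕ Fin n) ℚ :=
  if ∀ j, 0 ≤ (L j).1 ∧ 0 ≤ (L j).2 then
    deltaOfList n fun j => ((L j).1.toNat, (L j).2.toNat)
  else 0

/-- The Ferrers diagram of a partition with `h` rows and parts `μ 0 ≥ μ 1 ≥ …`:
the set of cells `(r, c)` with `r < h` and `c < μ r`. -/
def ferrers (h : ℕ) (μ : ℕ → ℕ) : Finset (ℕ × ℕ) :=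
  (Finset.range h ×ˢ Finset.range (μ 0)).filter fun rc => rc.2 < μ rc.1

/-- The shadow of the cell `(i, j)` in the diagram `F`. -/
def shadowF (F : Finset (ℕ × ℕ)) (i j : ℕ) : Finset (ℕ × ℕ) :=
  F.filter fun c => i ≤ c.1 ∧ j ≤ c.2

/-- The space `M^k_{i,j}(X,Y)`: the sum of the spaces `M_{μ/S}` over all `k`-element
subsets `S` of the shadow of `(i,j)` in the diagram `F` (of a partition of `n + k`). -/
def Mk (n k : ℕ) (F : Finset (ℕ × ℕ)) (i j : ℕ) :
    Submodule ℚ (MvPolynomial (Fin n ⊕ Fin n) ℚ) :=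
  ⨆ S ∈ Finset.powersetCard k (shadowF F i j), derivSpan (deltaOfFinset n (F \ S))

/-- The submodule of polynomials involving only the `x` variables
(elements of `Y`-degree `0`). -/
def onlyX (n : ℕ) : Submodule ℚ (MvPolynomial (Fin n ⊕ Fin n) ℚ) :=
  Subalgebra.toSubmodule (MvPolynomial.supported ℚ (Set.range Sum.inl))

/-- The space `M^k_{i,j}(X)`: the elements of `M^k_{i,j}(X,Y)` of `Y`-degree 0. -/
def MkX (n k : ℕ) (F : Finset (ℕ × ℕ)) (i j : ℕ) :
    Submodule ℚ (MvPolynomial (Fin n ⊕ Fin n) ℚ) :=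
  Mk n k F i j ⊓ onlyX n

end

/-- The monomial differential-operator polynomial
`x_{n+1}^{a₁} y_{n+1}^{b₁} ⋯ x_{n+k}^{a_k} y_{n+k}^{b_k}` attached to a set `S` of `k`
cells `(a₁,b₁) < ⋯ < (a_k,b_k)` listed in increasing lexicographic order. -/
noncomputable def holeOp (n k : ℕ) (S : Finset (ℕ × ℕ)) :
    MvPolynomial (Fin (n + k) ⊕ Fin (n + k)) ℚ :=
  ∏ m : Fin k,
    (X (Sum.inl (Fin.natAdd n m)) ^ ((S.sort lexLE).getD m (0, 0)).1
      * X (Sum.inr (Fin.natAdd n m)) ^ ((S.sort lexLE).getD m (0, 0)).2)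


set_option linter.unusedSectionVars false
set_option maxHeartbeats 1000000
set_option synthInstance.maxHeartbeats 400000
noncomputable section AllLemmas
section Helpers
variable {σ : Type*} [DecidableEq σ] {σ' : Type*} [DecidableEq σ']

lemma supportSum_add (g : (σ →₀ ℕ) → ℚ → MvPolynomial σ' ℚ)
    (hg0 : ∀ e, g e 0 = 0) (hgadd : ∀ e r s, g e (r + s) = g e r + g e s)
    (Q R : MvPolynomial σ ℚ) :
    ∑ e ∈ (Q + R).support, g e ((Q + R).coeff e)
      = ∑ e ∈ Q.support, g e (Q.coeff e) + ∑ e ∈ R.support, g e (R.coeff e) := by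
  classical
  set U := Q.support ∪ R.support with hU
  have key : ∀ W : MvPolynomial σ ℚ, W.support ⊆ U →
      ∑ e ∈ W.support, g e (W.coeff e) = ∑ e ∈ U, g e (W.coeff e) := by
    intro W hW
    refine Finset.sum_subset hW (fun e _ he => ?_)
    rw [MvPolynomial.notMem_support_iff.mp he, hg0]
  rw [key Q Finset.subset_union_left, key R Finset.subset_union_right,
    key (Q + R) (Finset.Subset.trans (MvPolynomial.support_add) (le_refl U)),
    ← Finset.sum_add_distrib]
  exact Finset.sum_congr rfl fun e _ => by rw [MvPolynomial.coeff_add, hgadd]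

lemma supportSum_smul (g : (σ →₀ ℕ) → ℚ → MvPolynomial σ' ℚ)
    (hg0 : ∀ e, g e 0 = 0) (hgsmul : ∀ e (c r : ℚ), g e (c * r) = c • g e r)
    (c : ℚ) (Q : MvPolynomial σ ℚ) :
    ∑ e ∈ (c • Q).support, g e ((c • Q).coeff e)
      = c • ∑ e ∈ Q.support, g e (Q.coeff e) := by
  classical
  have h1 : ∑ e ∈ (c • Q).support, g e ((c • Q).coeff e)
      = ∑ e ∈ Q.support, g e ((c • Q).coeff e) := by
    refine Finset.sum_subset (MvPolynomial.support_smul) (fun e _ he => ?_)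
    rw [MvPolynomial.notMem_support_iff.mp he, hg0]
  rw [h1, Finset.smul_sum]
  exact Finset.sum_congr rfl fun e _ => by
    rw [MvPolynomial.coeff_smul, smul_eq_mul, hgsmul]

lemma monDiff_add (m : σ →₀ ℕ) (Q R : MvPolynomial σ ℚ) :
    monDiff m (Q + R) = monDiff m Q + monDiff m R := by
  unfold monDiff
  exact supportSum_add
    (fun e r => monomial (e - m) (r * ∏ v ∈ m.support, ((e v).descFactorial (m v) : ℚ)))
    (fun e => by rw [zero_mul, map_zero])
    (fun e r s => by rw [add_mul, map_add]) Q R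

lemma monDiff_smul (m : σ →₀ ℕ) (c : ℚ) (Q : MvPolynomial σ ℚ) :
    monDiff m (c • Q) = c • monDiff m Q := by
  unfold monDiff
  exact supportSum_smul
    (fun e r => monomial (e - m) (r * ∏ v ∈ m.support, ((e v).descFactorial (m v) : ℚ)))
    (fun e => by rw [zero_mul, map_zero])
    (fun e c r => by rw [mul_assoc, ← smul_eq_mul (α := ℚ), map_smul]) c Q

def monDiffL (m : σ →₀ ℕ) : MvPolynomial σ ℚ →ₗ[ℚ] MvPolynomial σ ℚ where
  toFun := monDiff m
  map_add' := monDiff_add m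
  map_smul' := monDiff_smul m

lemma monDiff_monomial (m e : σ →₀ ℕ) (r : ℚ) :
    monDiff m (monomial e r)
      = monomial (e - m) (r * ∏ v ∈ m.support, ((e v).descFactorial (m v) : ℚ)) := by
  classical
  unfold monDiff
  rw [MvPolynomial.support_monomial]
  by_cases hr : r = 0
  · simp [hr]
  · rw [if_neg hr, Finset.sum_singleton, MvPolynomial.coeff_monomial, if_pos rfl]

lemma monDiff_zero_op (Q : MvPolynomial σ ℚ) : monDiff 0 Q = Q := by
  unfold monDiff
  simp only [Finsupp.support_zero, Finset.prod_empty, mul_one, tsub_zero]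
  exact Q.support_sum_monomial_coeff

lemma descFactorial_split (p a b : ℕ) :
    p.descFactorial (a + b) = p.descFactorial a * (p - a).descFactorial b := by
  induction b with
  | zero => simp
  | succ b ih =>
      rw [show a + (b+1) = (a+b)+1 from rfl, Nat.descFactorial_succ, ih,
        Nat.descFactorial_succ]
      have : p - (a + b) = p - a - b := by omega
      rw [this]; ring

lemma prod_dF_subset (e m : σ →₀ ℕ) (U : Finset σ) (h : m.support ⊆ U) :
    ∏ v ∈ m.support, ((e v).descFactorial (m v) : ℚ)
      = ∏ v ∈ U, ((e v).descFactorial (m v) : ℚ) :=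
  Finset.prod_subset h (fun v _ hv => by
    rw [Finsupp.notMem_support_iff.mp hv, Nat.descFactorial_zero, Nat.cast_one])

lemma monDiff_monDiff (m m' : σ →₀ ℕ) (Q : MvPolynomial σ ℚ) :
    monDiff m (monDiff m' Q) = monDiff (m' + m) Q := by
  induction Q using MvPolynomial.induction_on' with
  | monomial e r =>
      classical
      rw [monDiff_monomial, monDiff_monomial, monDiff_monomial]
      have hexp : e - m' - m = e - (m' + m) := tsub_tsub e m' m
      rw [hexp]
      congr 1
      set U := m'.support ∪ m.support with hU
      rw [prod_dF_subset e m' U Finset.subset_union_left,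
        prod_dF_subset (e - m') m U Finset.subset_union_right,
        prod_dF_subset e (m' + m) U (Finset.Subset.trans Finsupp.support_add (le_refl U))]
      rw [mul_assoc, ← Finset.prod_mul_distrib]
      congr 1
      refine Finset.prod_congr rfl fun v _ => ?_
      rw [Finsupp.add_apply, Finsupp.tsub_apply, descFactorial_split, Nat.cast_mul]
  | add p q hp hq => rw [monDiff_add, monDiff_add, monDiff_add, hp, hq]

lemma applyDiff_add_right (P Q R : MvPolynomial σ ℚ) :
    applyDiff P (Q + R) = applyDiff P Q + applyDiff P R := by
  unfold applyDiff
  rw [← Finset.sum_add_distrib]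
  exact Finset.sum_congr rfl fun m _ => by rw [monDiff_add, smul_add]

lemma applyDiff_smul_right (P : MvPolynomial σ ℚ) (c : ℚ) (Q : MvPolynomial σ ℚ) :
    applyDiff P (c • Q) = c • applyDiff P Q := by
  unfold applyDiff
  rw [Finset.smul_sum]
  exact Finset.sum_congr rfl fun m _ => by rw [monDiff_smul, smul_comm]

lemma applyDiff_zero_right (P : MvPolynomial σ ℚ) : applyDiff P 0 = 0 := by
  have := applyDiff_smul_right P 0 0
  simpa using this

def applyDiffL (P : MvPolynomial σ ℚ) : MvPolynomial σ ℚ →ₗ[ℚ] MvPolynomial σ ℚ where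
  toFun := applyDiff P
  map_add' := applyDiff_add_right P
  map_smul' := applyDiff_smul_right P

lemma applyDiff_monomial_left (m : σ →₀ ℕ) (c : ℚ) (Q : MvPolynomial σ ℚ) :
    applyDiff (monomial m c) Q = c • monDiff m Q := by
  classical
  unfold applyDiff
  rw [MvPolynomial.support_monomial]
  by_cases hc : c = 0
  · simp [hc]
  · rw [if_neg hc, Finset.sum_singleton, MvPolynomial.coeff_monomial, if_pos rfl]

lemma applyDiff_monDiff (P : MvPolynomial σ ℚ) (m : σ →₀ ℕ) (Q : MvPolynomial σ ℚ) :
    applyDiff P (monDiff m Q) = monDiff m (applyDiff P Q) := by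
  unfold applyDiff
  rw [show monDiff m (∑ m' ∈ P.support, P.coeff m' • monDiff m' Q)
      = ∑ m' ∈ P.support, monDiff m (P.coeff m' • monDiff m' Q) from
    map_sum (monDiffL m) _ _]
  refine Finset.sum_congr rfl fun m' _ => ?_
  rw [monDiff_smul]
  congr 1
  rw [monDiff_monDiff, monDiff_monDiff, add_comm]

end Helpers

section Phi

variable (n k : ℕ)

def emb (n k : ℕ) : Fin n ⊕ Fin n → Fin (n + k) ⊕ Fin (n + k) :=
  Sum.map (Fin.castAdd k) (Fin.castAdd k)

lemma emb_inj : Function.Injective (emb n k) := by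
  have h : Function.Injective (Fin.castAdd (n := n) k) := fun a b hab => by
    simpa [Fin.ext_iff] using hab
  exact Sum.map_injective.mpr ⟨h, h⟩

lemma natAdd_not_range_inl (m : Fin k) :
    (Sum.inl (Fin.natAdd n m) : Fin (n+k) ⊕ Fin (n+k)) ∉ Set.range (emb n k) := by
  rintro ⟨x | x, hx⟩ <;> simp only [emb, Sum.map_inl, Sum.map_inr, Sum.inl.injEq] at hx
  · have := congrArg Fin.val hx; simp [Fin.castAdd, Fin.natAdd] at this; omega
  · simp at hx

lemma natAdd_not_range_inr (m : Fin k) :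
    (Sum.inr (Fin.natAdd n m) : Fin (n+k) ⊕ Fin (n+k)) ∉ Set.range (emb n k) := by
  rintro ⟨x | x, hx⟩ <;> simp only [emb, Sum.map_inl, Sum.map_inr, Sum.inr.injEq] at hx
  · simp at hx
  · have := congrArg Fin.val hx; simp [Fin.castAdd, Fin.natAdd] at this; omega

def restrictE (e : (Fin (n+k) ⊕ Fin (n+k)) →₀ ℕ) : (Fin n ⊕ Fin n) →₀ ℕ :=
  Finsupp.comapDomain (emb n k) e ((emb_inj n k).injOn)

lemma restrictE_apply (e : (Fin (n+k) ⊕ Fin (n+k)) →₀ ℕ) (v : Fin n ⊕ Fin n) :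
    restrictE n k e v = e (emb n k v) := rfl

def Pcond (c : Fin k → ℕ × ℕ) (e : (Fin (n+k) ⊕ Fin (n+k)) →₀ ℕ) : Prop :=
  ∀ m : Fin k, e (Sum.inl (Fin.natAdd n m)) = (c m).1 ∧ e (Sum.inr (Fin.natAdd n m)) = (c m).2

instance (c : Fin k → ℕ × ℕ) : DecidablePred (Pcond n k c) := fun e => by
  unfold Pcond; infer_instance

def Phi (c : Fin k → ℕ × ℕ) (G : MvPolynomial (Fin (n+k) ⊕ Fin (n+k)) ℚ) :
    MvPolynomial (Fin n ⊕ Fin n) ℚ :=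
  ∑ e ∈ G.support,
    if Pcond n k c e then monomial (restrictE n k e) (G.coeff e) else 0

lemma Phi_add (c : Fin k → ℕ × ℕ) (G H : MvPolynomial (Fin (n+k) ⊕ Fin (n+k)) ℚ) :
    Phi n k c (G + H) = Phi n k c G + Phi n k c H := by
  unfold Phi
  exact supportSum_add
    (fun e r => if Pcond n k c e then monomial (restrictE n k e) r else 0)
    (fun e => by split <;> simp)
    (fun e r s => by split <;> simp) G H

lemma Phi_smul (c : Fin k → ℕ × ℕ) (a : ℚ) (G : MvPolynomial (Fin (n+k) ⊕ Fin (n+k)) ℚ) :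
    Phi n k c (a • G) = a • Phi n k c G := by
  unfold Phi
  exact supportSum_smul
    (fun e r => if Pcond n k c e then monomial (restrictE n k e) r else 0)
    (fun e => by split <;> simp)
    (fun e a r => by split <;> simp [MvPolynomial.smul_monomial]) a G

def PhiL (c : Fin k → ℕ × ℕ) :
    MvPolynomial (Fin (n+k) ⊕ Fin (n+k)) ℚ →ₗ[ℚ] MvPolynomial (Fin n ⊕ Fin n) ℚ where
  toFun := Phi n k c
  map_add' := Phi_add n k c
  map_smul' := Phi_smul n k c

lemma Phi_monomial (c : Fin k → ℕ × ℕ) (e : (Fin (n+k) ⊕ Fin (n+k)) →₀ ℕ) (r : ℚ) :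
    Phi n k c (monomial e r)
      = if Pcond n k c e then monomial (restrictE n k e) r else 0 := by
  classical
  unfold Phi
  rw [MvPolynomial.support_monomial]
  by_cases hr : r = 0
  · simp only [hr, if_pos rfl, Finset.sum_empty, map_zero]
    split <;> simp
  · rw [if_neg hr, Finset.sum_singleton, MvPolynomial.coeff_monomial, if_pos rfl]

lemma exponent_ext {e e' : (Fin (n+k) ⊕ Fin (n+k)) →₀ ℕ}
    (h1 : restrictE n k e = restrictE n k e')
    (h2 : ∀ m : Fin k, e (Sum.inl (Fin.natAdd n m)) = e' (Sum.inl (Fin.natAdd n m))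
      ∧ e (Sum.inr (Fin.natAdd n m)) = e' (Sum.inr (Fin.natAdd n m))) : e = e' := by
  ext v
  have key : ∀ w : Fin (n+k), (∀ u : Fin n, w ≠ Fin.castAdd k u) → ∃ m : Fin k, w = Fin.natAdd n m := by
    intro w hw
    by_cases hlt : (w : ℕ) < n
    · exact absurd (Fin.ext (show (w:ℕ) = (Fin.castAdd k ⟨w, hlt⟩ : Fin (n+k)) from rfl)) (hw ⟨w, hlt⟩)
    · exact ⟨⟨(w : ℕ) - n, by omega⟩, Fin.ext (by simp [Fin.natAdd]; omega)⟩
  rcases v with w | w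
  · by_cases hc : ∃ u : Fin n, w = Fin.castAdd k u
    · obtain ⟨u, rfl⟩ := hc
      have := congrArg (fun f => f (Sum.inl u)) h1
      simpa [restrictE_apply, emb] using this
    · push_neg at hc
      obtain ⟨m, rfl⟩ := key w hc
      exact (h2 m).1
  · by_cases hc : ∃ u : Fin n, w = Fin.castAdd k u
    · obtain ⟨u, rfl⟩ := hc
      have := congrArg (fun f => f (Sum.inr u)) h1
      simpa [restrictE_apply, emb] using this
    · push_neg at hc
      obtain ⟨m, rfl⟩ := key w hc
      exact (h2 m).2

lemma eq_zero_of_Phi (G : MvPolynomial (Fin (n+k) ⊕ Fin (n+k)) ℚ)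
    (h : ∀ c : Fin k → ℕ × ℕ, Phi n k c G = 0) : G = 0 := by
  classical
  by_contra hG
  obtain ⟨e₀, he₀⟩ := MvPolynomial.support_nonempty.mpr hG
  set c : Fin k → ℕ × ℕ :=
    fun m => (e₀ (Sum.inl (Fin.natAdd n m)), e₀ (Sum.inr (Fin.natAdd n m))) with hc
  have hPc : Pcond n k c e₀ := fun m => ⟨rfl, rfl⟩
  have hco : MvPolynomial.coeff (restrictE n k e₀) (Phi n k c G) = G.coeff e₀ := by
    unfold Phi
    rw [MvPolynomial.coeff_sum]
    rw [Finset.sum_eq_single e₀]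
    · rw [if_pos hPc, MvPolynomial.coeff_monomial, if_pos rfl]
    · intro e he hne
      split
      · rw [MvPolynomial.coeff_monomial]
        rename_i hPe
        rw [if_neg]
        intro heq
        exact hne (exponent_ext n k heq (fun m => by rw [(hPe m).1, (hPc m).1, (hPe m).2, (hPc m).2]; exact ⟨rfl, rfl⟩))
      · simp
    · intro h'; exact absurd he₀ h'
  rw [h c] at hco
  simp only [MvPolynomial.coeff_zero] at hco
  exact (MvPolynomial.mem_support_iff.mp he₀) hco.symm

lemma Pcond_tsub (c : Fin k → ℕ × ℕ) (e : (Fin (n+k) ⊕ Fin (n+k)) →₀ ℕ) (m : (Fin n ⊕ Fin n) →₀ ℕ) :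
    Pcond n k c (e - Finsupp.mapDomain (emb n k) m) ↔ Pcond n k c e := by
  have hl : ∀ m' : Fin k,
      (e - Finsupp.mapDomain (emb n k) m) (Sum.inl (Fin.natAdd n m')) = e (Sum.inl (Fin.natAdd n m')) := by
    intro m'
    rw [Finsupp.tsub_apply, Finsupp.mapDomain_notin_range _ _ (natAdd_not_range_inl n k m'), Nat.sub_zero]
  have hr : ∀ m' : Fin k,
      (e - Finsupp.mapDomain (emb n k) m) (Sum.inr (Fin.natAdd n m')) = e (Sum.inr (Fin.natAdd n m')) := by
    intro m'
    rw [Finsupp.tsub_apply, Finsupp.mapDomain_notin_range _ _ (natAdd_not_range_inr n k m'), Nat.sub_zero]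
  unfold Pcond
  constructor <;> intro h m' <;> have := h m'
  · rw [hl m', hr m'] at this; exact this
  · rw [hl m', hr m']; exact this

lemma restrictE_tsub (e : (Fin (n+k) ⊕ Fin (n+k)) →₀ ℕ) (m : (Fin n ⊕ Fin n) →₀ ℕ) :
    restrictE n k (e - Finsupp.mapDomain (emb n k) m) = restrictE n k e - m := by
  ext v
  rw [restrictE_apply, Finsupp.tsub_apply, Finsupp.tsub_apply, restrictE_apply,
    Finsupp.mapDomain_apply (emb_inj n k)]

lemma Phi_monDiff (c : Fin k → ℕ × ℕ) (m : (Fin n ⊕ Fin n) →₀ ℕ)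
    (G : MvPolynomial (Fin (n+k) ⊕ Fin (n+k)) ℚ) :
    Phi n k c (monDiff (Finsupp.mapDomain (emb n k) m) G) = monDiff m (Phi n k c G) := by
  induction G using MvPolynomial.induction_on' with
  | monomial e r =>
      rw [monDiff_monomial, Phi_monomial, Phi_monomial]
      by_cases hP : Pcond n k c e
      · rw [if_pos ((Pcond_tsub n k c e m).mpr hP), if_pos hP,
          monDiff_monomial, restrictE_tsub]
        congr 1
        congr 1
        rw [Finsupp.mapDomain_support_of_injective (emb_inj n k),
          Finset.prod_image (fun a _ b _ h => emb_inj n k h)]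
        refine Finset.prod_congr rfl fun v _ => ?_
        rw [Finsupp.mapDomain_apply (emb_inj n k), restrictE_apply]
      · rw [if_neg (fun h => hP ((Pcond_tsub n k c e m).mp h)), if_neg hP,
          show monDiff m (0 : MvPolynomial (Fin n ⊕ Fin n) ℚ) = 0 from map_zero (monDiffL m)]
  | add p q hp hq => rw [monDiff_add, Phi_add, Phi_add, hp, hq, monDiff_add]

lemma Phi_applyDiff (c : Fin k → ℕ × ℕ) (P : MvPolynomial (Fin n ⊕ Fin n) ℚ)
    (G : MvPolynomial (Fin (n+k) ⊕ Fin (n+k)) ℚ) :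
    Phi n k c (applyDiff (rename (emb n k) P) G) = applyDiff P (Phi n k c G) := by
  classical
  have hexp : applyDiff (rename (emb n k) P) G
      = ∑ m ∈ P.support, P.coeff m • monDiff (Finsupp.mapDomain (emb n k) m) G := by
    unfold applyDiff
    rw [MvPolynomial.support_rename_of_injective (emb_inj n k), Finset.sum_image
      (fun a _ b _ h => Finsupp.mapDomain_injective (emb_inj n k) h)]
    refine Finset.sum_congr rfl fun m _ => ?_
    rw [MvPolynomial.coeff_rename_mapDomain _ (emb_inj n k)]
  rw [hexp,
    show Phi n k c (∑ m ∈ P.support, P.coeff m • monDiff (Finsupp.mapDomain (emb n k) m) G)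
      = ∑ m ∈ P.support, Phi n k c (P.coeff m • monDiff (Finsupp.mapDomain (emb n k) m) G) from
    map_sum (PhiL n k c) _ _]
  unfold applyDiff
  refine Finset.sum_congr rfl fun m _ => ?_
  rw [Phi_smul, Phi_monDiff]

end Phi

section Det

lemma prod_monomial_one {σ' : Type*} [DecidableEq σ'] {β : Type*} (s : Finset β)
    (f : β → (σ' →₀ ℕ)) :
    ∏ j ∈ s, (monomial (f j) (1 : ℚ)) = monomial (∑ j ∈ s, f j) 1 := by
  classical
  induction s using Finset.cons_induction with
  | empty => simp
  | cons a s ha ih =>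
      rw [Finset.prod_cons, Finset.sum_cons, ih, MvPolynomial.monomial_mul, one_mul]

def signQ {N : ℕ} (σ : Equiv.Perm (Fin N)) : ℚ := ((Equiv.Perm.sign σ : ℤ) : ℚ)

lemma signQ_ne_zero {N : ℕ} (σ : Equiv.Perm (Fin N)) : signQ σ ≠ 0 := by
  unfold signQ
  rcases Int.units_eq_one_or (Equiv.Perm.sign σ) with h | h <;> rw [h] <;> norm_num

def expOf (N : ℕ) (L : Fin N → ℕ × ℕ) (σ : Equiv.Perm (Fin N)) : (Fin N ⊕ Fin N) →₀ ℕ :=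
  ∑ j : Fin N, (Finsupp.single (Sum.inl (σ j)) (L j).1 + Finsupp.single (Sum.inr (σ j)) (L j).2)

lemma expOf_apply_inl (N : ℕ) (L : Fin N → ℕ × ℕ) (σ : Equiv.Perm (Fin N)) (r : Fin N) :
    expOf N L σ (Sum.inl r) = (L (σ⁻¹ r)).1 := by
  unfold expOf
  rw [Finsupp.finset_sum_apply, Finset.sum_eq_single (σ⁻¹ r)]
  · simp [Finsupp.single_apply, Equiv.Perm.coe_inv]
  · intro j _ hj
    have h1 : σ j ≠ r := fun h => hj (by rw [← h]; simp)
    simp [Finsupp.single_apply, h1]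
  · simp

lemma expOf_apply_inr (N : ℕ) (L : Fin N → ℕ × ℕ) (σ : Equiv.Perm (Fin N)) (r : Fin N) :
    expOf N L σ (Sum.inr r) = (L (σ⁻¹ r)).2 := by
  unfold expOf
  rw [Finsupp.finset_sum_apply, Finset.sum_eq_single (σ⁻¹ r)]
  · simp [Finsupp.single_apply, Equiv.Perm.coe_inv]
  · intro j _ hj
    have h1 : σ j ≠ r := fun h => hj (by rw [← h]; simp)
    simp [Finsupp.single_apply, h1]
  · simp

lemma deltaOfList_expand (N : ℕ) (L : Fin N → ℕ × ℕ) :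
    deltaOfList N L = ∑ σ : Equiv.Perm (Fin N), monomial (expOf N L σ) (signQ σ) := by
  unfold deltaOfList
  rw [Matrix.det_apply']
  refine Finset.sum_congr rfl fun σ _ => ?_
  have hfac : ∀ i : Fin N,
      (Matrix.of fun i j : Fin N => X (Sum.inl i) ^ (L j).1 * X (Sum.inr i) ^ (L j).2) (σ i) i
        = monomial (Finsupp.single (Sum.inl (σ i)) (L i).1
            + Finsupp.single (Sum.inr (σ i)) (L i).2) (1 : ℚ) := by
    intro i
    rw [Matrix.of_apply, MvPolynomial.X_pow_eq_monomial, MvPolynomial.X_pow_eq_monomial,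
      MvPolynomial.monomial_mul, one_mul]
  rw [Finset.prod_congr rfl (fun i _ => hfac i), prod_monomial_one]
  rw [show ((Equiv.Perm.sign σ : ℤ) : MvPolynomial (Fin N ⊕ Fin N) ℚ)
      = C (((Equiv.Perm.sign σ : ℤ) : ℚ)) from (map_intCast (C : ℚ →+* _) _).symm,
    MvPolynomial.C_mul_monomial, mul_one]
  rfl

def Kfac {N : ℕ} (m0 e : (Fin N ⊕ Fin N) →₀ ℕ) : ℚ :=
  ∏ v ∈ m0.support, ((e v).descFactorial (m0 v) : ℚ)

lemma monDiff_deltaOfList (N : ℕ) (L : Fin N → ℕ × ℕ) (m0 : (Fin N ⊕ Fin N) →₀ ℕ) :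
    monDiff m0 (deltaOfList N L)
      = ∑ σ : Equiv.Perm (Fin N),
          monomial (expOf N L σ - m0) (signQ σ * Kfac m0 (expOf N L σ)) := by
  rw [deltaOfList_expand,
    show monDiff m0 (∑ σ : Equiv.Perm (Fin N), monomial (expOf N L σ) (signQ σ))
      = ∑ σ : Equiv.Perm (Fin N), monDiff m0 (monomial (expOf N L σ) (signQ σ)) from
    map_sum (monDiffL m0) _ _]
  exact Finset.sum_congr rfl fun σ _ => monDiff_monomial _ _ _

end Det

section Hole

lemma castAdd_or_natAdd {n k : ℕ} (w : Fin (n + k)) :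
    (∃ u : Fin n, w = Fin.castAdd k u) ∨ (∃ m : Fin k, w = Fin.natAdd n m) := by
  by_cases hlt : (w : ℕ) < n
  · exact Or.inl ⟨⟨w, hlt⟩, Fin.ext rfl⟩
  · exact Or.inr ⟨⟨(w : ℕ) - n, by omega⟩, Fin.ext (by simp [Fin.natAdd]; omega)⟩

lemma natAdd_inj {n k : ℕ} {a b : Fin k} (h : Fin.natAdd n a = Fin.natAdd n b) : a = b := by
  have := congrArg Fin.val h
  simp [Fin.natAdd] at this
  exact Fin.ext this

lemma castAdd_ne_natAdd {n k : ℕ} (u : Fin n) (m : Fin k) :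
    Fin.castAdd k u ≠ Fin.natAdd n m := by
  intro h
  have := congrArg Fin.val h
  simp [Fin.natAdd, Fin.castAdd] at this
  omega

def holeExp (n k : ℕ) (s : Fin k → ℕ × ℕ) : (Fin (n+k) ⊕ Fin (n+k)) →₀ ℕ :=
  ∑ m : Fin k, (Finsupp.single (Sum.inl (Fin.natAdd n m)) (s m).1
    + Finsupp.single (Sum.inr (Fin.natAdd n m)) (s m).2)

lemma holeExp_inl_natAdd (n k : ℕ) (s : Fin k → ℕ × ℕ) (m : Fin k) :
    holeExp n k s (Sum.inl (Fin.natAdd n m)) = (s m).1 := by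
  unfold holeExp
  rw [Finsupp.finset_sum_apply, Finset.sum_eq_single m]
  · simp [Finsupp.single_apply]
  · intro j _ hj
    have : Fin.natAdd n j ≠ Fin.natAdd n m := fun h => hj (natAdd_inj h)
    simp [Finsupp.single_apply, this]
  · simp

lemma holeExp_inr_natAdd (n k : ℕ) (s : Fin k → ℕ × ℕ) (m : Fin k) :
    holeExp n k s (Sum.inr (Fin.natAdd n m)) = (s m).2 := by
  unfold holeExp
  rw [Finsupp.finset_sum_apply, Finset.sum_eq_single m]
  · simp [Finsupp.single_apply]
  · intro j _ hj
    have : Fin.natAdd n j ≠ Fin.natAdd n m := fun h => hj (natAdd_inj h)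
    simp [Finsupp.single_apply, this]
  · simp

lemma holeExp_inl_castAdd (n k : ℕ) (s : Fin k → ℕ × ℕ) (u : Fin n) :
    holeExp n k s (Sum.inl (Fin.castAdd k u)) = 0 := by
  unfold holeExp
  rw [Finsupp.finset_sum_apply]
  refine Finset.sum_eq_zero fun j _ => ?_
  have : Fin.natAdd n j ≠ Fin.castAdd k u := fun h => castAdd_ne_natAdd u j h.symm
  simp [Finsupp.single_apply, this]

lemma holeExp_inr_castAdd (n k : ℕ) (s : Fin k → ℕ × ℕ) (u : Fin n) :
    holeExp n k s (Sum.inr (Fin.castAdd k u)) = 0 := by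
  unfold holeExp
  rw [Finsupp.finset_sum_apply]
  refine Finset.sum_eq_zero fun j _ => ?_
  have : Fin.natAdd n j ≠ Fin.castAdd k u := fun h => castAdd_ne_natAdd u j h.symm
  simp [Finsupp.single_apply, this]

lemma holeExp_mem_support_inl (n k : ℕ) (s : Fin k → ℕ × ℕ) (m : Fin k)
    (h : (s m).1 ≠ 0) : (Sum.inl (Fin.natAdd n m) : Fin (n+k) ⊕ Fin (n+k)) ∈ (holeExp n k s).support := by
  rw [Finsupp.mem_support_iff, holeExp_inl_natAdd]; exact h

lemma holeExp_mem_support_inr (n k : ℕ) (s : Fin k → ℕ × ℕ) (m : Fin k)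
    (h : (s m).2 ≠ 0) : (Sum.inr (Fin.natAdd n m) : Fin (n+k) ⊕ Fin (n+k)) ∈ (holeExp n k s).support := by
  rw [Finsupp.mem_support_iff, holeExp_inr_natAdd]; exact h

lemma holeExp_support_subset (n k : ℕ) (s : Fin k → ℕ × ℕ) :
    (holeExp n k s).support ⊆
      (Finset.univ.image fun m : Fin k => (Sum.inl (Fin.natAdd n m) : Fin (n+k) ⊕ Fin (n+k)))
      ∪ (Finset.univ.image fun m : Fin k => (Sum.inr (Fin.natAdd n m) : Fin (n+k) ⊕ Fin (n+k))) := by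
  intro v hv
  rw [Finsupp.mem_support_iff] at hv
  rcases v with w | w
  · rcases castAdd_or_natAdd w with ⟨u, rfl⟩ | ⟨m, rfl⟩
    · exact absurd (holeExp_inl_castAdd n k s u) hv
    · exact Finset.mem_union_left _ (Finset.mem_image.mpr ⟨m, Finset.mem_univ m, rfl⟩)
  · rcases castAdd_or_natAdd w with ⟨u, rfl⟩ | ⟨m, rfl⟩
    · exact absurd (holeExp_inr_castAdd n k s u) hv
    · exact Finset.mem_union_right _ (Finset.mem_image.mpr ⟨m, Finset.mem_univ m, rfl⟩)

end Hole

section SortedSub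

def LFun (n k : ℕ) (F : Finset (ℕ × ℕ)) (hF : F.card = n + k) : Fin (n+k) → ℕ × ℕ :=
  fun j => (F.sort plexLE).get ⟨j.1, by rw [Finset.length_sort, hF]; exact j.2⟩

variable {n k : ℕ} {F : Finset (ℕ × ℕ)}

lemma LFun_injective (hF : F.card = n + k) : Function.Injective (LFun n k F hF) := by
  intro a b hab
  have hnd := F.sort_nodup plexLE
  have h2 := List.nodup_iff_injective_get.mp hnd hab
  have h3 := congrArg Fin.val h2
  exact Fin.ext h3

lemma LFun_mem (hF : F.card = n + k) (j : Fin (n+k)) : LFun n k F hF j ∈ F :=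
  (Finset.mem_sort plexLE).mp (List.get_mem _ _)

lemma LFun_surj (hF : F.card = n + k) {x : ℕ × ℕ} (hx : x ∈ F) :
    ∃ j, LFun n k F hF j = x := by
  have hx' : x ∈ F.sort plexLE := (Finset.mem_sort plexLE).mpr hx
  obtain ⟨i, hi⟩ := List.mem_iff_get.mp hx'
  have hlen : (F.sort plexLE).length = n + k := by rw [Finset.length_sort, hF]
  refine ⟨⟨i.1, by rw [← hlen]; exact i.2⟩, ?_⟩
  unfold LFun
  rw [← hi]

lemma deltaOfFinset_eq (hF : F.card = n + k) :
    deltaOfFinset (n+k) F = deltaOfList (n+k) (LFun n k F hF) := by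
  unfold deltaOfFinset
  rw [dif_pos hF]
  rfl

lemma sorted_sublist (hF : F.card = n + k) (T : Finset (ℕ × ℕ)) (hT : T ⊆ F)
    (hTk : T.card = k) (D : Finset (Fin (n+k)))
    (hDdef : ∀ j, j ∈ D ↔ LFun n k F hF j ∉ T) (hD : D.card = n) :
    deltaOfFinset n (F \ T) = deltaOfList n (fun u => LFun n k F hF (D.orderIsoOfFin hD u)) := by
  have hcard : (F \ T).card = n := by
    rw [Finset.card_sdiff_of_subset hT, hF, hTk]; omega
  set L2 := (F \ T).sort plexLE with hL2
  have hlen2 : L2.length = n := by rw [hL2, Finset.length_sort, hcard]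
  set M := List.ofFn (fun u : Fin n => LFun n k F hF (D.orderIsoOfFin hD u)) with hM
  have hMinj : Function.Injective (fun u : Fin n => LFun n k F hF (D.orderIsoOfFin hD u)) := by
    intro a b hab
    have h1 := LFun_injective hF hab
    have h2 : (D.orderIsoOfFin hD a : {x // x ∈ D}) = D.orderIsoOfFin hD b :=
      Subtype.ext h1
    exact (D.orderIsoOfFin hD).injective h2
  have hMnodup : M.Nodup := List.nodup_ofFn.mpr hMinj
  have hMsorted : M.Pairwise plexLE := by
    rw [hM, List.pairwise_ofFn]
    intro a b hab
    have hlt : (D.orderIsoOfFin hD a : Fin (n+k)) < (D.orderIsoOfFin hD b : Fin (n+k)) := by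
      have := (D.orderIsoOfFin hD).lt_iff_lt.mpr hab
      exact this
    have hsorted := F.pairwise_sort plexLE
    have := hsorted.rel_get_of_lt (a := ⟨(D.orderIsoOfFin hD a : Fin (n+k)).1, by
        rw [Finset.length_sort, hF]; exact (D.orderIsoOfFin hD a : Fin (n+k)).2⟩)
      (b := ⟨(D.orderIsoOfFin hD b : Fin (n+k)).1, by
        rw [Finset.length_sort, hF]; exact (D.orderIsoOfFin hD b : Fin (n+k)).2⟩)
      (by exact hlt)
    exact this
  have hmem : ∀ x, x ∈ M ↔ x ∈ L2 := by
    intro x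
    rw [hL2, Finset.mem_sort, hM, List.mem_ofFn]
    constructor
    · rintro ⟨u, rfl⟩
      rw [Finset.mem_sdiff]
      refine ⟨LFun_mem hF _, ?_⟩
      exact (hDdef _).mp (D.orderIsoOfFin hD u).2
    · intro hx
      rw [Finset.mem_sdiff] at hx
      obtain ⟨j, rfl⟩ := LFun_surj hF hx.1
      have hjD : j ∈ D := (hDdef j).mpr hx.2
      refine ⟨(D.orderIsoOfFin hD).symm ⟨j, hjD⟩, ?_⟩
      simp
  have hperm : M.Perm L2 := by
    refine List.perm_of_nodup_nodup_toFinset_eq hMnodup (Finset.sort_nodup _ _) ?_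
    ext x
    rw [List.mem_toFinset, List.mem_toFinset, hmem]
  have hML2 : M = L2 :=
    List.Perm.eq_of_pairwise' hMsorted ((F \ T).pairwise_sort plexLE) hperm
  unfold deltaOfFinset
  rw [dif_pos hcard]
  congr 1
  funext u
  show (L2.get _) = _
  have hg : ∀ i : Fin L2.length, L2.get i = M.get (Fin.cast (by rw [hML2]) i) :=
    fun i => List.get_of_eq hML2.symm i
  rw [hg, List.get_ofFn]
  exact congrArg _ (Fin.ext rfl)

end SortedSub

section CoreLemmas

variable {n k : ℕ} {F : Finset (ℕ × ℕ)}

def tCell {k : ℕ} (s c : Fin k → ℕ × ℕ) (m : Fin k) : ℕ × ℕ :=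
  ((s m).1 + (c m).1, (s m).2 + (c m).2)

lemma Phi_monDiff_delta (n k : ℕ) (c : Fin k → ℕ × ℕ) (m0 : (Fin (n+k) ⊕ Fin (n+k)) →₀ ℕ)
    (L : Fin (n+k) → ℕ × ℕ) :
    Phi n k c (monDiff m0 (deltaOfList (n+k) L))
      = ∑ σ : Equiv.Perm (Fin (n+k)),
          (if Pcond n k c (expOf (n+k) L σ - m0) then
            monomial (restrictE n k (expOf (n+k) L σ - m0))
              (signQ σ * Kfac m0 (expOf (n+k) L σ)) else 0) := by
  rw [monDiff_deltaOfList,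
    show Phi n k c (∑ σ : Equiv.Perm (Fin (n+k)),
        monomial (expOf (n+k) L σ - m0) (signQ σ * Kfac m0 (expOf (n+k) L σ)))
      = ∑ σ : Equiv.Perm (Fin (n+k)),
        Phi n k c (monomial (expOf (n+k) L σ - m0) (signQ σ * Kfac m0 (expOf (n+k) L σ))) from
    map_sum (PhiL n k c) _ _]
  exact Finset.sum_congr rfl fun σ _ => Phi_monomial _ _ _ _ _

lemma survivor (hF : F.card = n + k) (s c : Fin k → ℕ × ℕ) (σ : Equiv.Perm (Fin (n+k)))
    (hP : Pcond n k c (expOf (n+k) (LFun n k F hF) σ - holeExp n k s))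
    (hK : Kfac (holeExp n k s) (expOf (n+k) (LFun n k F hF) σ) ≠ 0) (m : Fin k) :
    LFun n k F hF (σ⁻¹ (Fin.natAdd n m)) = tCell s c m := by
  have h1 := (hP m).1
  rw [Finsupp.tsub_apply, expOf_apply_inl, holeExp_inl_natAdd] at h1
  have h2 := (hP m).2
  rw [Finsupp.tsub_apply, expOf_apply_inr, holeExp_inr_natAdd] at h2
  have hge1 : (s m).1 ≤ (LFun n k F hF (σ⁻¹ (Fin.natAdd n m))).1 := by
    by_cases hz : (s m).1 = 0
    · omega
    by_contra hlt
    push_neg at hlt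
    apply hK
    refine Finset.prod_eq_zero (holeExp_mem_support_inl n k s m hz) ?_
    rw [expOf_apply_inl, holeExp_inl_natAdd, Nat.descFactorial_eq_zero_iff_lt.mpr hlt,
      Nat.cast_zero]
  have hge2 : (s m).2 ≤ (LFun n k F hF (σ⁻¹ (Fin.natAdd n m))).2 := by
    by_cases hz : (s m).2 = 0
    · omega
    by_contra hlt
    push_neg at hlt
    apply hK
    refine Finset.prod_eq_zero (holeExp_mem_support_inr n k s m hz) ?_
    rw [expOf_apply_inr, holeExp_inr_natAdd, Nat.descFactorial_eq_zero_iff_lt.mpr hlt,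
      Nat.cast_zero]
  unfold tCell
  exact Prod.ext (by omega) (by omega)

lemma core_zero (hF : F.card = n + k) (s c : Fin k → ℕ × ℕ)
    (h : ¬ ((∀ m, tCell s c m ∈ F) ∧ Function.Injective (tCell s c))) :
    Phi n k c (monDiff (holeExp n k s) (deltaOfList (n+k) (LFun n k F hF))) = 0 := by
  rw [Phi_monDiff_delta]
  refine Finset.sum_eq_zero fun σ _ => ?_
  by_cases hP : Pcond n k c (expOf (n+k) (LFun n k F hF) σ - holeExp n k s)
  swap
  · rw [if_neg hP]
  rw [if_pos hP]
  by_cases hK : Kfac (holeExp n k s) (expOf (n+k) (LFun n k F hF) σ) = 0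
  · rw [hK, mul_zero, map_zero]
  exfalso
  apply h
  constructor
  · intro m
    rw [← survivor hF s c σ hP hK m]
    exact LFun_mem hF _
  · intro m m' hmm'
    have e1 := survivor hF s c σ hP hK m
    have e2 := survivor hF s c σ hP hK m'
    have h3 : σ⁻¹ (Fin.natAdd n m) = σ⁻¹ (Fin.natAdd n m') :=
      LFun_injective hF (by rw [e1, e2, hmm'])
    exact natAdd_inj ((σ⁻¹).injective h3)

lemma core_sum (hF : F.card = n + k) (s c : Fin k → ℕ × ℕ)
    (ht : ∀ m, tCell s c m ∈ F) (htinj : Function.Injective (tCell s c)) :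
    ∃ r : ℚ, r ≠ 0 ∧
      Phi n k c (monDiff (holeExp n k s) (deltaOfList (n+k) (LFun n k F hF)))
        = r • deltaOfFinset n (F \ Finset.image (tCell s c) Finset.univ) := by
  classical
  set L := LFun n k F hF with hLdef
  set t := tCell s c with htdef
  set T := Finset.image t Finset.univ with hTdef
  have hTsub : T ⊆ F := by
    intro x hx
    obtain ⟨m, _, rfl⟩ := Finset.mem_image.mp hx
    exact ht m
  have hTk : T.card = k := by
    rw [hTdef, Finset.card_image_of_injective _ htinj, Finset.card_univ, Fintype.card_fin]
  have hpos : ∀ m, ∃ j, L j = t m := fun m => LFun_surj hF (ht m)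
  set pos : Fin k → Fin (n+k) := fun m => (hpos m).choose with hposdef
  have hLpos : ∀ m, L (pos m) = t m := fun m => (hpos m).choose_spec
  have hposinj : Function.Injective pos := fun a b hab =>
    htinj (by rw [← hLpos a, ← hLpos b, hab])
  set D := Finset.univ.filter (fun j => L j ∉ T) with hDdef'
  have hDdef : ∀ j, j ∈ D ↔ L j ∉ T := fun j => by
    rw [hDdef', Finset.mem_filter]
    simp
  have hDcard : D.card = n := by
    have himg : (Finset.univ.filter (fun j => L j ∈ T)).image L = T := by
      ext x
      rw [Finset.mem_image]
      constructor
      · rintro ⟨j, hj, rfl⟩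
        exact (Finset.mem_filter.mp hj).2
      · intro hx
        obtain ⟨j, rfl⟩ := LFun_surj hF (hTsub hx)
        exact ⟨j, Finset.mem_filter.mpr ⟨Finset.mem_univ _, hx⟩, rfl⟩
    have hcf : (Finset.univ.filter (fun j => L j ∈ T)).card = k := by
      have h8 : (Finset.image L (Finset.filter (fun j => L j ∈ T) Finset.univ)).card
          = (Finset.filter (fun j => L j ∈ T) Finset.univ).card :=
        Finset.card_image_of_injective _ (LFun_injective hF)
      rw [himg] at h8
      rw [← h8, hTk]
    have hsplit := Finset.card_filter_add_card_filter_not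
      (s := (Finset.univ : Finset (Fin (n+k)))) (p := fun j => L j ∈ T)
    rw [Finset.card_univ, Fintype.card_fin] at hsplit
    have hDD : D = Finset.univ.filter (fun j => ¬ (L j ∈ T)) := rfl
    rw [hDD]
    omega
  have hposD : ∀ m, pos m ∉ D := by
    intro m hm
    exact (hDdef (pos m)).mp hm (by rw [hLpos m]; exact Finset.mem_image_of_mem _ (Finset.mem_univ m))
  set oe : Fin n → Fin (n+k) := fun u => (D.orderIsoOfFin hDcard u : Fin (n+k)) with hoedef
  have hoeD : ∀ u, oe u ∈ D := fun u => (D.orderIsoOfFin hDcard u).2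
  have hoeinj : Function.Injective oe := fun a b hab =>
    (D.orderIsoOfFin hDcard).injective (Subtype.ext hab)
  set f : Fin n ⊕ Fin k → Fin (n+k) := Sum.elim oe pos with hfdef
  have hfinj : Function.Injective f := by
    rintro (u | m) (u' | m') h
    · rw [hoeinj h]
    · exact absurd ((show oe u = pos m' from h) ▸ hoeD u) (hposD m')
    · exact absurd ((show oe u' = pos m from h.symm) ▸ hoeD u') (hposD m)
    · rw [hposinj h]
  have hfbij : Function.Bijective f := by
    rw [Fintype.bijective_iff_injective_and_card]
    exact ⟨hfinj, by simp⟩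
  set eqC : (Fin n ⊕ Fin k) ≃ Fin (n+k) := Equiv.ofBijective f hfbij with heqCdef
  have heqC_inl : ∀ u, eqC (Sum.inl u) = oe u := fun u => rfl
  have heqC_inr : ∀ m, eqC (Sum.inr m) = pos m := fun m => rfl
  set Θ : Equiv.Perm (Fin n) → Equiv.Perm (Fin (n+k)) := fun π =>
    eqC.symm.trans ((Equiv.sumCongr π (Equiv.refl (Fin k))).trans finSumFinEquiv) with hΘdef
  have hΘapp : ∀ π x, Θ π x = finSumFinEquiv ((Equiv.sumCongr π (Equiv.refl (Fin k))) (eqC.symm x)) :=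
    fun π x => rfl
  have hΘpos : ∀ π m, Θ π (pos m) = Fin.natAdd n m := by
    intro π m
    rw [hΘapp, show eqC.symm (pos m) = Sum.inr m from by
      rw [Equiv.symm_apply_eq, heqC_inr]]
    simp
  have hΘoe : ∀ π u, Θ π (oe u) = Fin.castAdd k (π u) := by
    intro π u
    rw [hΘapp, show eqC.symm (oe u) = Sum.inl u from by
      rw [Equiv.symm_apply_eq, heqC_inl]]
    simp
  have hΘinv_nat : ∀ π m, (Θ π)⁻¹ (Fin.natAdd n m) = pos m := by
    intro π m
    rw [← hΘpos π m]
    simp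
  have hΘinv_cast : ∀ π u, (Θ π)⁻¹ (Fin.castAdd k u) = oe (π⁻¹ u) := by
    intro π u
    rw [show Fin.castAdd k u = Θ π (oe (π⁻¹ u)) from by
      rw [hΘoe, Equiv.Perm.coe_inv, Equiv.apply_symm_apply]]
    simp
  set base : Equiv.Perm (Fin (n+k)) := eqC.symm.trans finSumFinEquiv with hbasedef
  have hsign : ∀ π, signQ (Θ π) = signQ base * signQ π := by
    intro π
    have hdecomp : Θ π
        = (Equiv.permCongr eqC (Equiv.sumCongr π (Equiv.refl (Fin k)))).trans base := by
      ext x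
      simp [Equiv.permCongr, base, hΘapp]
    have hmul : Θ π = base * (Equiv.permCongr eqC (Equiv.sumCongr π (Equiv.refl (Fin k)))) := by
      rw [hdecomp]; rfl
    unfold signQ
    rw [hmul, map_mul, Equiv.Perm.sign_permCongr, Equiv.Perm.sign_sumCongr, Equiv.Perm.sign_refl,
      mul_one, Units.val_mul, Int.cast_mul]
  -- the common exponent and coefficient on the fiber
  set m0 := holeExp n k s with hm0def
  set L2 : Fin n → ℕ × ℕ := fun u => L (oe u) with hL2def
  set K0 : ℚ := ∏ m : Fin k,
    (((t m).1.descFactorial ((s m).1) : ℚ) * ((t m).2.descFactorial ((s m).2) : ℚ)) with hK0def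
  have hK0ne : K0 ≠ 0 := by
    rw [hK0def]
    rw [Finset.prod_ne_zero_iff]
    intro m _
    have h1 : (s m).1 ≤ (t m).1 := by rw [htdef]; exact Nat.le_add_right _ _
    have h2 : (s m).2 ≤ (t m).2 := by rw [htdef]; exact Nat.le_add_right _ _
    have d1 : (t m).1.descFactorial ((s m).1) ≠ 0 := by
      intro h0; rw [Nat.descFactorial_eq_zero_iff_lt] at h0; omega
    have d2 : (t m).2.descFactorial ((s m).2) ≠ 0 := by
      intro h0; rw [Nat.descFactorial_eq_zero_iff_lt] at h0; omega
    exact mul_ne_zero (Nat.cast_ne_zero.mpr d1) (Nat.cast_ne_zero.mpr d2)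
  have hPcTheta : ∀ π, Pcond n k c (expOf (n+k) L (Θ π) - m0) := by
    intro π m
    constructor
    · rw [Finsupp.tsub_apply, expOf_apply_inl, hΘinv_nat, hLpos, hm0def, holeExp_inl_natAdd]
      rw [htdef]
      show (s m).1 + (c m).1 - (s m).1 = (c m).1
      omega
    · rw [Finsupp.tsub_apply, expOf_apply_inr, hΘinv_nat, hLpos, hm0def, holeExp_inr_natAdd]
      rw [htdef]
      show (s m).2 + (c m).2 - (s m).2 = (c m).2
      omega
  have hrestTheta : ∀ π, restrictE n k (expOf (n+k) L (Θ π) - m0) = expOf n L2 π := by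
    intro π
    ext v
    rcases v with u | u
    · rw [restrictE_apply, show emb n k (Sum.inl u) = Sum.inl (Fin.castAdd k u) from rfl,
        Finsupp.tsub_apply, expOf_apply_inl, hΘinv_cast, hm0def, holeExp_inl_castAdd,
        Nat.sub_zero, expOf_apply_inl]
    · rw [restrictE_apply, show emb n k (Sum.inr u) = Sum.inr (Fin.castAdd k u) from rfl,
        Finsupp.tsub_apply, expOf_apply_inr, hΘinv_cast, hm0def, holeExp_inr_castAdd,
        Nat.sub_zero, expOf_apply_inr]
  have hKTheta : ∀ π, Kfac m0 (expOf (n+k) L (Θ π)) = K0 := by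
    intro π
    unfold Kfac
    rw [prod_dF_subset (expOf (n+k) L (Θ π)) m0
      ((Finset.univ.image fun m : Fin k => (Sum.inl (Fin.natAdd n m) : Fin (n+k) ⊕ Fin (n+k)))
        ∪ (Finset.univ.image fun m : Fin k => (Sum.inr (Fin.natAdd n m) : Fin (n+k) ⊕ Fin (n+k))))
      (by rw [hm0def]; exact holeExp_support_subset n k s)]
    rw [Finset.prod_union (by
      rw [Finset.disjoint_left]
      rintro x hx hx'
      obtain ⟨m1, _, rfl⟩ := Finset.mem_image.mp hx
      obtain ⟨m2, _, h2⟩ := Finset.mem_image.mp hx'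
      exact nomatch h2)]
    rw [Finset.prod_image (fun a _ b _ h => natAdd_inj (Sum.inl.inj h)),
      Finset.prod_image (fun a _ b _ h => natAdd_inj (Sum.inr.inj h)),
      hK0def, Finset.prod_mul_distrib]
    congr 1
    · refine Finset.prod_congr rfl fun m _ => ?_
      rw [expOf_apply_inl, hΘinv_nat, hLpos, hm0def, holeExp_inl_natAdd]
    · refine Finset.prod_congr rfl fun m _ => ?_
      rw [expOf_apply_inr, hΘinv_nat, hLpos, hm0def, holeExp_inr_natAdd]
  refine ⟨signQ base * K0, mul_ne_zero (signQ_ne_zero base) hK0ne, ?_⟩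
  rw [Phi_monDiff_delta]
  set termF : Equiv.Perm (Fin (n+k)) → MvPolynomial (Fin n ⊕ Fin n) ℚ := fun σ =>
    if Pcond n k c (expOf (n+k) L σ - m0) then
      monomial (restrictE n k (expOf (n+k) L σ - m0)) (signQ σ * Kfac m0 (expOf (n+k) L σ))
    else 0 with htermdef
  have hstep1 : ∑ σ : Equiv.Perm (Fin (n+k)), termF σ
      = ∑ σ ∈ Finset.univ.filter
          (fun σ : Equiv.Perm (Fin (n+k)) => ∀ m, σ (pos m) = Fin.natAdd n m), termF σ := by
    refine (Finset.sum_subset (Finset.filter_subset _ _) ?_).symm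
    intro σ _ hσ
    rw [Finset.mem_filter, not_and] at hσ
    have hnot : ¬ ∀ m, σ (pos m) = Fin.natAdd n m := hσ (Finset.mem_univ σ)
    rw [htermdef]
    dsimp only
    by_cases hP : Pcond n k c (expOf (n+k) L σ - m0)
    swap
    · rw [if_neg hP]
    rw [if_pos hP]
    by_cases hK : Kfac m0 (expOf (n+k) L σ) = 0
    · rw [hK, mul_zero, map_zero]
    exfalso
    apply hnot
    intro m
    rw [hLdef, hm0def] at hP hK
    have hs := survivor hF s c σ hP hK m
    have h4 : σ⁻¹ (Fin.natAdd n m) = pos m :=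
      LFun_injective hF (hs.trans (hLpos m).symm)
    rw [← h4, Equiv.Perm.coe_inv, Equiv.apply_symm_apply]
  have hstep2 : ∑ σ ∈ Finset.univ.filter
        (fun σ : Equiv.Perm (Fin (n+k)) => ∀ m, σ (pos m) = Fin.natAdd n m), termF σ
      = ∑ π : Equiv.Perm (Fin n), termF (Θ π) := by
    refine (Finset.sum_bij (fun π _ => Θ π) ?_ ?_ ?_ ?_).symm
    · intro π _
      exact Finset.mem_filter.mpr ⟨Finset.mem_univ _, hΘpos π⟩
    · intro π _ π' _ h
      ext u
      have h5 := congrArg (fun σ : Equiv.Perm (Fin (n+k)) => σ (oe u)) h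
      rw [hΘoe, hΘoe] at h5
      have h6 := congrArg Fin.val h5
      exact h6
    · intro σ hσ
      have hsfib := (Finset.mem_filter.mp hσ).2
      have hval : ∀ u : Fin n, ∃ w : Fin n, σ (oe u) = Fin.castAdd k w := by
        intro u
        rcases castAdd_or_natAdd (σ (oe u)) with ⟨w, hw⟩ | ⟨m, hm⟩
        · exact ⟨w, hw⟩
        · exfalso
          have h6 : oe u = pos m := σ.injective (by rw [hm, ← hsfib m])
          exact hposD m (h6 ▸ hoeD u)
      have hg : ∀ u, σ (oe u) = Fin.castAdd k ((hval u).choose) := fun u => (hval u).choose_spec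
      have hginj : Function.Injective (fun u => (hval u).choose) := by
        intro a b hab
        have h7 : σ (oe a) = σ (oe b) := by
          rw [hg a, hg b]
          exact congrArg _ hab
        exact hoeinj (σ.injective h7)
      have hgbij := (Fintype.bijective_iff_injective_and_card _).mpr ⟨hginj, rfl⟩
      refine ⟨Equiv.ofBijective _ hgbij, Finset.mem_univ _, ?_⟩
      ext x
      have hx : eqC (eqC.symm x) = x := eqC.apply_symm_apply x
      rcases hy : eqC.symm x with u | m
      · rw [hy] at hx
        rw [← hx, heqC_inl, hΘoe, hg]
        rfl
      · rw [hy] at hx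
        rw [← hx, heqC_inr, hΘpos, hsfib]
    · intro π _
      rfl
  rw [hstep1, hstep2]
  have hstep3 : ∀ π : Equiv.Perm (Fin n),
      termF (Θ π) = (signQ base * K0) • monomial (expOf n L2 π) (signQ π) := by
    intro π
    rw [htermdef]
    dsimp only
    rw [if_pos (hPcTheta π), hrestTheta π, hKTheta π, hsign π, MvPolynomial.smul_monomial]
    congr 1
    rw [smul_eq_mul]
    ring
  rw [Finset.sum_congr rfl (fun π _ => hstep3 π), ← Finset.smul_sum,
    ← deltaOfList_expand n L2,
    sorted_sublist hF T hTsub hTk D hDdef hDcard]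

end CoreLemmas


section Glue

def sVec (k : ℕ) (S : Finset (ℕ × ℕ)) (hS : S.card = k) : Fin k → ℕ × ℕ :=
  fun m => (S.sort lexLE).get ⟨m.1, by rw [Finset.length_sort, hS]; exact m.2⟩

lemma sVec_mem {k : ℕ} {S : Finset (ℕ × ℕ)} (hS : S.card = k) (m : Fin k) :
    sVec k S hS m ∈ S := (Finset.mem_sort lexLE).mp (List.get_mem _ _)

lemma sVec_inj {k : ℕ} {S : Finset (ℕ × ℕ)} (hS : S.card = k) :
    Function.Injective (sVec k S hS) := by
  intro a b hab
  have h2 := List.nodup_iff_injective_get.mp (S.sort_nodup lexLE) hab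
  have h3 := congrArg Fin.val h2
  exact Fin.ext h3

lemma sVec_image {k : ℕ} {S : Finset (ℕ × ℕ)} (hS : S.card = k) :
    Finset.image (sVec k S hS) Finset.univ = S := by
  apply Finset.eq_of_subset_of_card_le
  · intro x hx
    obtain ⟨m, _, rfl⟩ := Finset.mem_image.mp hx
    exact sVec_mem hS m
  · rw [Finset.card_image_of_injective _ (sVec_inj hS), Finset.card_univ, Fintype.card_fin, hS]

lemma holeOp_eq (n k : ℕ) (S : Finset (ℕ × ℕ)) (hS : S.card = k) :
    holeOp n k S = monomial (holeExp n k (sVec k S hS)) 1 := by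
  unfold holeOp
  have hlen : (S.sort lexLE).length = k := by rw [Finset.length_sort, hS]
  have hfac : ∀ m : Fin k,
      (X (Sum.inl (Fin.natAdd n m)) ^ ((S.sort lexLE).getD m (0, 0)).1
        * X (Sum.inr (Fin.natAdd n m)) ^ ((S.sort lexLE).getD m (0, 0)).2
        : MvPolynomial (Fin (n+k) ⊕ Fin (n+k)) ℚ)
      = monomial (Finsupp.single (Sum.inl (Fin.natAdd n m)) ((sVec k S hS) m).1
          + Finsupp.single (Sum.inr (Fin.natAdd n m)) ((sVec k S hS) m).2) 1 := by
    intro m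
    have hg : (S.sort lexLE).getD m (0, 0) = sVec k S hS m :=
      List.getD_eq_getElem _ _ (by rw [hlen]; exact m.2)
    rw [hg, X_pow_eq_monomial, X_pow_eq_monomial, MvPolynomial.monomial_mul, one_mul]
  rw [Finset.prod_congr rfl (fun m _ => hfac m), prod_monomial_one]
  rfl

lemma ann_Mk (n k : ℕ) (F : Finset (ℕ × ℕ)) (i j : ℕ) (P : MvPolynomial (Fin n ⊕ Fin n) ℚ) :
    (∀ Q ∈ Mk n k F i j, applyDiff P Q = 0) ↔
    ∀ S ∈ Finset.powersetCard k (shadowF F i j), applyDiff P (deltaOfFinset n (F \ S)) = 0 := by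
  constructor
  · intro hP S hS
    apply hP
    have h1 : deltaOfFinset n (F \ S) ∈ derivSpan (deltaOfFinset n (F \ S)) :=
      Submodule.subset_span ⟨0, (monDiff_zero_op _).symm⟩
    exact (le_iSup₂ (f := fun S (_ : S ∈ Finset.powersetCard k (shadowF F i j)) =>
      derivSpan (deltaOfFinset n (F \ S))) S hS) h1
  · intro hP Q hQ
    have hker : Mk n k F i j ≤ LinearMap.ker (applyDiffL P) := by
      refine iSup₂_le fun S hS => ?_
      rw [derivSpan, Submodule.span_le]
      rintro R ⟨m, rfl⟩
      rw [SetLike.mem_coe, LinearMap.mem_ker]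
      show applyDiff P (monDiff m _) = 0
      rw [applyDiff_monDiff, hP S hS,
        show monDiff m (0 : MvPolynomial (Fin n ⊕ Fin n) ℚ) = 0 from map_zero (monDiffL m)]
    exact LinearMap.mem_ker.mp (hker hQ)

end Glue

end AllLemmas

/-- Proposition (I = I): the annihilator ideal of `M^k_{i,j}(X,Y)` is the intersection,
over all `k`-element subsets of the shadow of `(i,j)`, of the annihilators (within
`ℚ[X_n,Y_n]`) of the polynomials
`∂x_{n+1}^{a₁}∂y_{n+1}^{b₁}⋯∂x_{n+k}^{a_k}∂y_{n+k}^{b_k} Δ_μ(X_{n+k};Y_{n+k})`. -/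
theorem statement8 (n k h i j : ℕ) (μ : ℕ → ℕ)
    (hanti : Antitone μ) (hpos : ∀ r, r < h → 0 < μ r) (hzero : ∀ r, h ≤ r → μ r = 0)
    (hcard : (ferrers h μ).card = n + k) (hij : (i, j) ∈ ferrers h μ) :
    {P : MvPolynomial (Fin n ⊕ Fin n) ℚ |
        ∀ Q ∈ Mk n k (ferrers h μ) i j, applyDiff P Q = 0}
      = ⋂ S ∈ Finset.powersetCard k (shadowF (ferrers h μ) i j),
          {P : MvPolynomial (Fin n ⊕ Fin n) ℚ |
            applyDiff (MvPolynomial.rename (Sum.map (Fin.castAdd k) (Fin.castAdd k)) P)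
              (applyDiff (holeOp n k S) (deltaOfFinset (n + k) (ferrers h μ))) = 0} := by
  classical
  set F := ferrers h μ with hFdef
  ext P
  simp only [Set.mem_setOf_eq, Set.mem_iInter]
  rw [ann_Mk]
  have hPA : ∀ (c : Fin k → ℕ × ℕ) (G : MvPolynomial (Fin (n+k) ⊕ Fin (n+k)) ℚ),
      Phi n k c (applyDiff (MvPolynomial.rename (Sum.map (Fin.castAdd k) (Fin.castAdd k)) P) G)
        = applyDiff P (Phi n k c G) := fun c G => Phi_applyDiff n k c P G
  constructor
  · intro hP S hS
    obtain ⟨hSsub, hSk⟩ := Finset.mem_powersetCard.mp hS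
    rw [holeOp_eq n k S hSk, applyDiff_monomial_left, one_smul, deltaOfFinset_eq hcard]
    refine eq_zero_of_Phi n k _ (fun c => ?_)
    rw [hPA c _]
    by_cases hcase : (∀ m, tCell (sVec k S hSk) c m ∈ F)
        ∧ Function.Injective (tCell (sVec k S hSk) c)
    · obtain ⟨r, hr0, hreq⟩ := core_sum hcard (sVec k S hSk) c hcase.1 hcase.2
      have hT : Finset.image (tCell (sVec k S hSk) c) Finset.univ
          ∈ Finset.powersetCard k (shadowF F i j) := by
        rw [Finset.mem_powersetCard]
        constructor
        · intro x hx
          obtain ⟨m, _, rfl⟩ := Finset.mem_image.mp hx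
          have hsm := hSsub (sVec_mem hSk m)
          rw [shadowF, Finset.mem_filter] at hsm ⊢
          refine ⟨hcase.1 m, ?_, ?_⟩
          · have h1 := hsm.2.1
            show i ≤ (sVec k S hSk m).1 + (c m).1
            omega
          · have h2 := hsm.2.2
            show j ≤ (sVec k S hSk m).2 + (c m).2
            omega
        · rw [Finset.card_image_of_injective _ hcase.2, Finset.card_univ, Fintype.card_fin]
      rw [hreq, applyDiff_smul_right, hP _ hT, smul_zero]
    · rw [core_zero hcard (sVec k S hSk) c hcase, applyDiff_zero_right]
  · intro hP S hS
    obtain ⟨hSsub, hSk⟩ := Finset.mem_powersetCard.mp hS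
    have hbig := hP S hS
    set c : Fin k → ℕ × ℕ := fun _ => (0, 0) with hcdef
    have htc : tCell (sVec k S hSk) c = sVec k S hSk := funext fun m => by
      simp [tCell, hcdef]
    have ht : ∀ m, tCell (sVec k S hSk) c m ∈ F := fun m => by
      rw [htc]
      have hsm := hSsub (sVec_mem hSk m)
      rw [shadowF, Finset.mem_filter] at hsm
      exact hsm.1
    have htinj : Function.Injective (tCell (sVec k S hSk) c) := by
      rw [htc]; exact sVec_inj hSk
    obtain ⟨r, hr0, hreq⟩ := core_sum hcard (sVec k S hSk) c ht htinj
    rw [htc, sVec_image hSk] at hreq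
    rw [holeOp_eq n k S hSk, applyDiff_monomial_left, one_smul, deltaOfFinset_eq hcard] at hbig
    have h2 : Phi n k c (applyDiff
        (MvPolynomial.rename (Sum.map (Fin.castAdd k) (Fin.castAdd k)) P)
        (monDiff (holeExp n k (sVec k S hSk)) (deltaOfList (n+k) (LFun n k F hcard)))) = 0 := by
      rw [hbig]
      exact map_zero (PhiL n k c)
    rw [hPA, hreq, applyDiff_smul_right] at h2
    have h4 := congrArg (fun q : MvPolynomial (Fin n ⊕ Fin n) ℚ => r⁻¹ • q) h2
    simpa [smul_smul, inv_mul_cancel₀ hr0] using h4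
end

section
/- Let μ be a partition of n+k with h rows and largest part μ₁, let (i,j) ∈ μ, and fix pairwise distinct rationals α₁,…,α_h and pairwise distinct rationals β₁,…,β_{μ₁}. For each tableau T obtained by filling n of the cells of μ bijectively with 1,…,n in such a way that the k empty cells all lie in the shadow of (i,j), define the point (a(T),b(T)) ∈ ℚ^{2n} by a_m(T) = α_{r+1} and b_m(T) = β_{c+1} whenever entry m occupies cell (r,c) of T. If P ∈ ℚ[X_n,Y_n] vanishes at (a(T),b(T)) for every such tableau T, then gr(P)(∂) annihilates every element of M^k_{i,j}(X,Y), where gr(P) denotes the homogeneous component of P of degree equal to the total degree of P. -/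
open MvPolynomial

noncomputable section Aux9
namespace S9
open MvPolynomial Finset Matrix
set_option linter.unusedSectionVars false
set_option linter.unusedVariables false

/-! ### Pairing machinery -/

variable {σ : Type*} [Fintype σ] [DecidableEq σ]

def fct (a : σ →₀ ℕ) : ℚ := ∏ v : σ, ((a v).factorial : ℚ)

lemma fct_ne_zero (a : σ →₀ ℕ) : fct a ≠ 0 :=
  Finset.prod_ne_zero_iff.2 fun v _ => Nat.cast_ne_zero.2 (Nat.factorial_ne_zero _)

lemma fct_add (c m : σ →₀ ℕ) :
    fct (c + m) = (∏ v ∈ m.support, (((c v + m v).descFactorial (m v)) : ℚ)) * fct c := by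
  have key : ∀ v : σ, (((c + m) v).factorial : ℚ)
      = ((c v + m v).descFactorial (m v) : ℚ) * ((c v).factorial : ℚ) := by
    intro v
    have h := Nat.factorial_mul_descFactorial (n := c v + m v) (k := m v) (Nat.le_add_left _ _)
    rw [Nat.add_sub_cancel] at h
    rw [Finsupp.add_apply, ← h]
    push_cast
    ring
  calc fct (c + m)
      = ∏ v : σ, (((c v + m v).descFactorial (m v) : ℚ) * ((c v).factorial : ℚ)) :=
        Finset.prod_congr rfl fun v _ => key v
    _ = (∏ v : σ, ((c v + m v).descFactorial (m v) : ℚ)) * fct c := by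
        rw [Finset.prod_mul_distrib]; rfl
    _ = _ := by
        congr 1
        symm
        apply Finset.prod_subset (Finset.subset_univ _)
        intro v _ hv
        simp only [Finsupp.notMem_support_iff] at hv
        simp [hv]

def pr (P Q : MvPolynomial σ ℚ) : ℚ := ∑ a ∈ Q.support, P.coeff a * Q.coeff a * fct a

lemma descprod_ne_zero (c m : σ →₀ ℕ) :
    (∏ v ∈ m.support, (((c v + m v).descFactorial (m v)) : ℚ)) ≠ 0 := by
  apply Finset.prod_ne_zero_iff.2
  intro v _
  rw [Nat.cast_ne_zero]
  intro h0
  have := Nat.descFactorial_eq_zero_iff_lt.1 h0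
  omega

lemma coeff_monDiff (m : σ →₀ ℕ) (Q : MvPolynomial σ ℚ) (c : σ →₀ ℕ) :
    coeff c (monDiff m Q)
      = Q.coeff (c + m) * ∏ v ∈ m.support, (((c v + m v).descFactorial (m v)) : ℚ) := by
  unfold monDiff
  rw [coeff_sum]
  rw [Finset.sum_eq_single (c + m)]
  · rw [add_tsub_cancel_right, coeff_monomial, if_pos rfl]
    congr 1
  · intro a _ hne
    rw [coeff_monomial]
    by_cases hac : a - m = c
    · rw [if_pos hac]
      have hnle : ¬ m ≤ a := by
        intro hle
        exact hne (by rw [← hac, tsub_add_cancel_of_le hle])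
      rw [Finsupp.le_def] at hnle
      push_neg at hnle
      obtain ⟨v, hv⟩ := hnle
      have hvs : v ∈ m.support := Finsupp.mem_support_iff.2 (by omega)
      have : ((a v).descFactorial (m v) : ℚ) = 0 := by
        rw [Nat.cast_eq_zero]
        exact Nat.descFactorial_eq_zero_iff_lt.2 (by omega)
      rw [Finset.prod_eq_zero hvs this, mul_zero]
    · rw [if_neg hac]
  · intro hns
    rw [MvPolynomial.notMem_support_iff.1 hns, zero_mul, add_tsub_cancel_right,
      coeff_monomial, if_pos rfl]

lemma monDiff_add (m : σ →₀ ℕ) (Q Q' : MvPolynomial σ ℚ) :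
    monDiff m (Q + Q') = monDiff m Q + monDiff m Q' := by
  apply MvPolynomial.ext
  intro c
  rw [coeff_add, coeff_monDiff, coeff_monDiff, coeff_monDiff, coeff_add]
  ring

lemma monDiff_smul (m : σ →₀ ℕ) (r : ℚ) (Q : MvPolynomial σ ℚ) :
    monDiff m (r • Q) = r • monDiff m Q := by
  apply MvPolynomial.ext
  intro c
  rw [coeff_smul, coeff_monDiff, coeff_monDiff, coeff_smul]
  simp only [smul_eq_mul]
  ring

lemma monDiff_zero (m : σ →₀ ℕ) : monDiff m (0 : MvPolynomial σ ℚ) = 0 := by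
  apply MvPolynomial.ext
  intro c
  rw [coeff_monDiff]
  simp

lemma applyDiff_add (W Q Q' : MvPolynomial σ ℚ) :
    applyDiff W (Q + Q') = applyDiff W Q + applyDiff W Q' := by
  unfold applyDiff
  rw [← Finset.sum_add_distrib]
  apply Finset.sum_congr rfl
  intro m _
  rw [monDiff_add, smul_add]

lemma applyDiff_smul (W : MvPolynomial σ ℚ) (r : ℚ) (Q : MvPolynomial σ ℚ) :
    applyDiff W (r • Q) = r • applyDiff W Q := by
  unfold applyDiff
  rw [Finset.smul_sum]
  apply Finset.sum_congr rfl
  intro m _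
  rw [monDiff_smul, smul_comm]

lemma applyDiff_zero (W : MvPolynomial σ ℚ) : applyDiff W (0 : MvPolynomial σ ℚ) = 0 := by
  unfold applyDiff
  apply Finset.sum_eq_zero
  intro m _
  rw [monDiff_zero, smul_zero]

lemma pr_monomial_mul (c : σ →₀ ℕ) (W Q : MvPolynomial σ ℚ) :
    pr (monomial c 1 * W) Q = ∑ m ∈ W.support, W.coeff m * Q.coeff (c + m) * fct (c + m) := by
  unfold pr
  have h1 : ∑ a ∈ Q.support, (monomial c 1 * W).coeff a * Q.coeff a * fct a
      = ∑ a ∈ Q.support ∪ W.support.image (c + ·),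
          (monomial c 1 * W).coeff a * Q.coeff a * fct a := by
    apply Finset.sum_subset Finset.subset_union_left
    intro a _ ha
    rw [MvPolynomial.notMem_support_iff.1 ha, mul_zero, zero_mul]
  have h2 : ∑ a ∈ Q.support ∪ W.support.image (c + ·),
          (monomial c 1 * W).coeff a * Q.coeff a * fct a
      = ∑ a ∈ W.support.image (c + ·), (monomial c 1 * W).coeff a * Q.coeff a * fct a := by
    symm
    apply Finset.sum_subset Finset.subset_union_right
    intro a _ hna
    rw [coeff_monomial_mul']
    by_cases hca : c ≤ a
    · rw [if_pos hca, one_mul]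
      have hz : W.coeff (a - c) = 0 := by
        by_contra hw
        exact hna (Finset.mem_image.2 ⟨a - c, MvPolynomial.mem_support_iff.2 hw,
          add_tsub_cancel_of_le hca⟩)
      rw [hz, zero_mul, zero_mul]
    · rw [if_neg hca, zero_mul, zero_mul]
  rw [h1, h2, Finset.sum_image (fun x _ y _ hxy => by exact add_left_cancel hxy)]
  apply Finset.sum_congr rfl
  intro m _
  rw [MvPolynomial.coeff_monomial_mul, one_mul]

lemma coeff_applyDiff (W Q : MvPolynomial σ ℚ) (c : σ →₀ ℕ) :
    coeff c (applyDiff W Q) * fct c = pr (monomial c 1 * W) Q := by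
  rw [pr_monomial_mul]
  unfold applyDiff
  rw [coeff_sum, Finset.sum_mul]
  apply Finset.sum_congr rfl
  intro m _
  rw [coeff_smul, smul_eq_mul, coeff_monDiff, fct_add]
  ring

lemma applyDiff_eq_zero_of_pr (W Q : MvPolynomial σ ℚ)
    (H : ∀ c, pr (monomial c 1 * W) Q = 0) : applyDiff W Q = 0 := by
  rw [MvPolynomial.eq_zero_iff]
  intro c
  have h := coeff_applyDiff W Q c
  rw [H c] at h
  exact (mul_eq_zero.1 h).resolve_right (fct_ne_zero c)

lemma pr_monDiff (R Δ : MvPolynomial σ ℚ) (m : σ →₀ ℕ) :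
    pr R (monDiff m Δ) = pr (monomial m 1 * R) Δ := by
  rw [pr_monomial_mul]
  have hterm : ∀ b, R.coeff b * (monDiff m Δ).coeff b * fct b
      = R.coeff b * Δ.coeff (m + b) * fct (m + b) := by
    intro b
    rw [coeff_monDiff, add_comm m b, fct_add b m]
    ring
  unfold pr
  rw [Finset.sum_congr rfl (fun b _ => hterm b)]
  have h1 : ∑ b ∈ (monDiff m Δ).support, R.coeff b * Δ.coeff (m + b) * fct (m + b)
      = ∑ b ∈ (monDiff m Δ).support ∪ R.support, R.coeff b * Δ.coeff (m + b) * fct (m + b) := by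
    apply Finset.sum_subset Finset.subset_union_left
    intro b _ hb
    have h0 : (monDiff m Δ).coeff b = 0 := MvPolynomial.notMem_support_iff.1 hb
    rw [coeff_monDiff] at h0
    have : Δ.coeff (b + m) = 0 := by
      rcases mul_eq_zero.1 h0 with h | h
      · exact h
      · exact absurd h (descprod_ne_zero b m)
    rw [add_comm m b, this, mul_zero, zero_mul]
  have h2 : ∑ b ∈ R.support, R.coeff b * Δ.coeff (m + b) * fct (m + b)
      = ∑ b ∈ (monDiff m Δ).support ∪ R.support, R.coeff b * Δ.coeff (m + b) * fct (m + b) := by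
    apply Finset.sum_subset Finset.subset_union_right
    intro b _ hb
    rw [MvPolynomial.notMem_support_iff.1 hb, zero_mul, zero_mul]
  rw [h1, ← h2]

/-! ### Degrees -/

lemma degree_eq_univ_sum (a : σ →₀ ℕ) : a.degree = ∑ v : σ, a v :=
  Finset.sum_subset (Finset.subset_univ _) (fun v _ hv => Finsupp.notMem_support_iff.1 hv)

lemma degree_add' (a b : σ →₀ ℕ) : (a + b).degree = a.degree + b.degree := by
  rw [degree_eq_univ_sum, degree_eq_univ_sum, degree_eq_univ_sum, ← Finset.sum_add_distrib]
  apply Finset.sum_congr rfl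
  intro v _
  rw [Finsupp.add_apply]

lemma sum_eq_degree (a : σ →₀ ℕ) : (a.sum fun _ e => e) = a.degree := rfl

lemma hc_shift (e : σ →₀ ℕ) (d : ℕ) (P : MvPolynomial σ ℚ) :
    monomial e 1 * homogeneousComponent d P
      = homogeneousComponent (d + e.degree) (monomial e 1 * P) := by
  apply MvPolynomial.ext
  intro a
  rw [coeff_monomial_mul', coeff_homogeneousComponent, coeff_homogeneousComponent,
    coeff_monomial_mul']
  by_cases hle : e ≤ a
  · have hdeg : a.degree = (a - e).degree + e.degree := by
      conv_lhs => rw [← tsub_add_cancel_of_le hle]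
      exact degree_add' _ _
    rw [if_pos hle, if_pos hle, one_mul, one_mul]
    by_cases hd : (a - e).degree = d
    · rw [if_pos hd, if_pos (by omega)]
    · rw [if_neg hd, if_neg (by omega)]
  · rw [if_neg hle, if_neg hle]
    by_cases hD : a.degree = d + e.degree
    · rw [if_pos hD]
    · rw [if_neg hD]

/-! ### Univariate interpolation bases -/

def pe (γ : ℕ → ℚ) (a : ℕ) : Polynomial ℚ :=
  ∏ r ∈ Finset.range a, (Polynomial.X - Polynomial.C (γ r))

lemma pe_monic (γ : ℕ → ℚ) (a : ℕ) : (pe γ a).Monic :=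
  Polynomial.monic_prod_of_monic _ _ fun r _ => Polynomial.monic_X_sub_C _

lemma pe_natDegree (γ : ℕ → ℚ) (a : ℕ) : (pe γ a).natDegree = a := by
  rw [pe, Polynomial.natDegree_prod_of_monic _ _ (fun r _ => Polynomial.monic_X_sub_C _)]
  simp

def ψp (γ : ℕ → ℚ) (hh a : ℕ) : Polynomial ℚ :=
  if a < hh then pe γ a else Polynomial.X ^ (a - hh) * pe γ hh

lemma ψp_monic (γ : ℕ → ℚ) (hh a : ℕ) : (ψp γ hh a).Monic := by
  unfold ψp; split_ifs
  · exact pe_monic γ a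
  · exact (Polynomial.monic_X_pow _).mul (pe_monic γ hh)

lemma ψp_natDegree (γ : ℕ → ℚ) (hh a : ℕ) : (ψp γ hh a).natDegree = a := by
  unfold ψp; split_ifs with hlt
  · exact pe_natDegree γ a
  · rw [Polynomial.natDegree_mul (Polynomial.monic_X_pow _).ne_zero (pe_monic γ hh).ne_zero,
      Polynomial.natDegree_X_pow, pe_natDegree]
    omega

lemma ψp_zero (γ : ℕ → ℚ) (hh : ℕ) : ψp γ hh 0 = 1 := by
  unfold ψp
  split_ifs with hlt
  · simp [pe]
  · have : hh = 0 := by omega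
    subst this
    simp [pe]

lemma rep (γ : ℕ → ℚ) (hh : ℕ) :
    ∀ (d : ℕ) (f : Polynomial ℚ), f.natDegree ≤ d →
      ∃ u : ℕ → ℚ, (∀ a, d < a → u a = 0) ∧ u d = f.coeff d ∧
        f = ∑ a ∈ Finset.range (d + 1), Polynomial.C (u a) * ψp γ hh a := by
  intro d
  induction d with
  | zero =>
      intro f hf
      refine ⟨fun a => if a = 0 then f.coeff 0 else 0, ?_, by simp, ?_⟩
      · intro a ha
        dsimp only
        rw [if_neg (by omega)]
      · dsimp only
        rw [Finset.sum_range_one, if_pos rfl, ψp_zero, mul_one]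
        exact Polynomial.eq_C_of_natDegree_le_zero hf
  | succ d ih =>
      intro f hf
      set g := f - Polynomial.C (f.coeff (d + 1)) * ψp γ hh (d + 1) with hg
      have hgd : g.natDegree ≤ d := by
        rw [Polynomial.natDegree_le_iff_coeff_eq_zero]
        intro N hN
        rw [hg, Polynomial.coeff_sub, Polynomial.coeff_C_mul]
        by_cases hN1 : N = d + 1
        · subst hN1
          have h1 : (ψp γ hh (d + 1)).coeff (d + 1) = 1 := by
            have := (ψp_monic γ hh (d + 1)).coeff_natDegree
            rwa [ψp_natDegree] at this
          rw [h1, mul_one, sub_self]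
        · have h1 : f.coeff N = 0 := Polynomial.coeff_eq_zero_of_natDegree_lt (by omega)
          have h2 : (ψp γ hh (d + 1)).coeff N = 0 :=
            Polynomial.coeff_eq_zero_of_natDegree_lt (by rw [ψp_natDegree]; omega)
          rw [h1, h2, mul_zero, sub_self]
      obtain ⟨u, hu0, hud, hrep⟩ := ih g hgd
      refine ⟨fun a => if a = d + 1 then f.coeff (d + 1) else u a, ?_, by simp, ?_⟩
      · intro a ha
        dsimp only
        rw [if_neg (by omega)]
        exact hu0 a (by omega)
      · dsimp only
        rw [Finset.sum_range_succ, if_pos rfl]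
        have hc : ∀ a ∈ Finset.range (d + 1),
            Polynomial.C (if a = d + 1 then f.coeff (d + 1) else u a) * ψp γ hh a
              = Polynomial.C (u a) * ψp γ hh a := by
          intro a ha
          rw [Finset.mem_range] at ha
          rw [if_neg (by omega)]
        rw [Finset.sum_congr rfl hc, ← hrep, hg]
        ring

/-! ### Interpolation matrices -/

def Km (γ : ℕ → ℚ) (hh : ℕ) : Matrix (Fin hh) (Fin hh) ℚ :=
  Matrix.of fun r a => ∏ r' ∈ Finset.range (a : ℕ), (γ r - γ r')

lemma Km_tri (γ : ℕ → ℚ) (hh : ℕ) : (Km γ hh)ᵀ.BlockTriangular id := by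
  intro a r hra
  show Km γ hh r a = 0
  simp only [Km, Matrix.of_apply]
  exact Finset.prod_eq_zero (Finset.mem_range.2 hra) (by simp)

lemma Km_det_isUnit (γ : ℕ → ℚ) (hh : ℕ) (hγ : Set.InjOn γ (Set.Iio hh)) :
    IsUnit (Km γ hh).det := by
  rw [← Matrix.det_transpose, Matrix.det_of_upperTriangular (Km_tri γ hh), isUnit_iff_ne_zero]
  apply Finset.prod_ne_zero_iff.2
  intro a _
  simp only [Matrix.transpose_apply, Km, Matrix.of_apply]
  apply Finset.prod_ne_zero_iff.2
  intro r' hr'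
  rw [Finset.mem_range] at hr'
  refine sub_ne_zero.2 fun hEq => ?_
  have : (a : ℕ) = r' := hγ (a.isLt : (a : ℕ) < hh) (lt_trans hr' a.isLt : r' < hh) hEq
  omega

def Gm (γ : ℕ → ℚ) (hh : ℕ) : Matrix (Fin hh) (Fin hh) ℚ := (Km γ hh)⁻¹

lemma Gm_mul_Km (γ : ℕ → ℚ) (hh : ℕ) (hγ : Set.InjOn γ (Set.Iio hh)) :
    Gm γ hh * Km γ hh = 1 := Matrix.nonsing_inv_mul _ (Km_det_isUnit γ hh hγ)

lemma Gm_tri (γ : ℕ → ℚ) (hh : ℕ) (hγ : Set.InjOn γ (Set.Iio hh)) :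
    ∀ p r : Fin hh, (p : ℕ) < (r : ℕ) → Gm γ hh p r = 0 := by
  intro p r hpr
  haveI : Invertible (Km γ hh)ᵀ := Matrix.invertibleOfIsUnitDet _
    (by rw [Matrix.det_transpose]; exact Km_det_isUnit γ hh hγ)
  have htri := Matrix.blockTriangular_inv_of_blockTriangular (Km_tri γ hh)
  have h0 : ((Km γ hh)ᵀ)⁻¹ r p = 0 := htri (by exact hpr)
  rw [← Matrix.transpose_nonsing_inv] at h0
  rw [Matrix.transpose_apply] at h0
  exact h0

def Um (γ : ℕ → ℚ) (hh : ℕ) (t : ℕ) (p : Fin hh) : ℚ :=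
  ∑ r : Fin hh, Gm γ hh p r * γ r ^ t

lemma Um_spec (γ : ℕ → ℚ) (hh : ℕ) (hγ : Set.InjOn γ (Set.Iio hh)) (t : ℕ) :
    ∃ u : ℕ → ℚ, (∀ a, t < a → u a = 0) ∧ u t = 1 ∧ ∀ p : Fin hh, Um γ hh t p = u p := by
  obtain ⟨u, hu0, hut, hrep⟩ := rep γ hh t (Polynomial.X ^ t)
    (by rw [Polynomial.natDegree_X_pow])
  refine ⟨u, hu0, by simpa using hut, ?_⟩
  intro p
  have moment : ∀ r : Fin hh, γ r ^ t = ∑ af : Fin hh, u af * Km γ hh r af := by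
    intro r
    have hev := congrArg (Polynomial.eval (γ r)) hrep
    rw [Polynomial.eval_pow, Polynomial.eval_X, Polynomial.eval_finset_sum] at hev
    simp only [Polynomial.eval_mul, Polynomial.eval_C] at hev
    rw [hev]
    have hψ0 : ∀ a, hh ≤ a → (ψp γ hh a).eval (γ r) = 0 := by
      intro a ha
      unfold ψp
      rw [if_neg (by omega), Polynomial.eval_mul]
      have hz : (pe γ hh).eval (γ r) = 0 := by
        unfold pe
        rw [Polynomial.eval_prod]
        exact Finset.prod_eq_zero (Finset.mem_range.2 r.isLt) (by simp)
      rw [hz, mul_zero]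
    have hψK : ∀ a : Fin hh, (ψp γ hh (a : ℕ)).eval (γ r) = Km γ hh r a := by
      intro a
      unfold ψp
      rw [if_pos a.isLt]
      unfold pe
      rw [Polynomial.eval_prod]
      apply Finset.prod_congr rfl
      intro x _
      simp
    have key : ∑ a ∈ Finset.range (t + 1), u a * (ψp γ hh a).eval (γ r)
        = ∑ a ∈ Finset.range hh, u a * (ψp γ hh a).eval (γ r) := by
      rcases le_total (t + 1) hh with hle | hle
      · apply Finset.sum_subset
        · intro x hx
          rw [Finset.mem_range] at *
          omega
        · intro x hx hnx
          rw [Finset.mem_range] at hx hnx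
          rw [hu0 x (by omega), zero_mul]
      · symm
        apply Finset.sum_subset
        · intro x hx
          rw [Finset.mem_range] at *
          omega
        · intro x hx hnx
          rw [Finset.mem_range] at hx hnx
          rw [hψ0 x (by omega), mul_zero]
    rw [key, ← Fin.sum_univ_eq_sum_range (fun a => u a * (ψp γ hh a).eval (γ r)) hh]
    exact Finset.sum_congr rfl fun a _ => by rw [hψK]
  unfold Um
  rw [Finset.sum_congr rfl (fun r _ => by rw [moment r])]
  rw [Finset.sum_congr rfl (fun r (_ : r ∈ Finset.univ) => Finset.mul_sum _ _ _)]
  rw [Finset.sum_comm]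
  have hstep : ∀ a : Fin hh,
      (∑ r : Fin hh, Gm γ hh p r * (u a * Km γ hh r a))
        = u a * (Gm γ hh * Km γ hh) p a := by
    intro a
    rw [Matrix.mul_apply, Finset.mul_sum]
    exact Finset.sum_congr rfl fun r _ => by ring
  rw [Finset.sum_congr rfl fun a _ => hstep a, Gm_mul_Km γ hh hγ]
  simp [Matrix.one_apply]

lemma Um_zero (γ : ℕ → ℚ) (hh : ℕ) (hγ : Set.InjOn γ (Set.Iio hh)) {t : ℕ} {p : Fin hh}
    (h : t < (p : ℕ)) : Um γ hh t p = 0 := by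
  obtain ⟨u, hu0, _, hval⟩ := Um_spec γ hh hγ t
  rw [hval p]
  exact hu0 _ h

lemma Um_one (γ : ℕ → ℚ) (hh : ℕ) (hγ : Set.InjOn γ (Set.Iio hh)) {t : ℕ} {p : Fin hh}
    (h : (p : ℕ) = t) : Um γ hh t p = 1 := by
  obtain ⟨u, _, hut, hval⟩ := Um_spec γ hh hγ t
  rw [hval p, h, hut]

/-! ### Ferrers helpers -/

lemma mem_ferrers {h : ℕ} {μ : ℕ → ℕ} {z : ℕ × ℕ} :
    z ∈ ferrers h μ ↔ z.1 < h ∧ z.2 < μ 0 ∧ z.2 < μ z.1 := by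
  unfold ferrers
  rw [Finset.mem_filter, Finset.mem_product, Finset.mem_range, Finset.mem_range]
  tauto

lemma ferrers_dc {h : ℕ} {μ : ℕ → ℕ} (hanti : Antitone μ) {z w : ℕ × ℕ}
    (hw : w ∈ ferrers h μ) (h1 : z.1 ≤ w.1) (h2 : z.2 ≤ w.2) : z ∈ ferrers h μ := by
  rw [mem_ferrers] at *
  refine ⟨by omega, by omega, ?_⟩
  have := hanti h1
  omega

/-! ### Auxiliary product of monomials -/

lemma prod_monomial_one {ι : Type*} (s : Finset ι) (dd : ι → (σ →₀ ℕ)) :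
    (∏ m ∈ s, (monomial (dd m) (1 : ℚ))) = monomial (∑ m ∈ s, dd m) 1 := by
  classical
  induction s using Finset.induction_on with
  | empty => simp [MvPolynomial.monomial_zero']
  | insert _ _ hx ih =>
      rw [Finset.prod_insert hx, Finset.sum_insert hx, ih, monomial_mul, one_mul]

end S9
end Aux9

noncomputable section Main9
namespace S9
open MvPolynomial Finset Matrix
set_option linter.unusedSectionVars false
set_option linter.unusedVariables false
set_option maxHeartbeats 1000000

theorem mainCore (n h i j : ℕ) (μ : ℕ → ℕ) (hanti : Antitone μ)
    (α β : ℕ → ℚ) (hα : Set.InjOn α (Set.Iio h)) (hβ : Set.InjOn β (Set.Iio (μ 0)))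
    (S : Finset (ℕ × ℕ)) (hSsub : S ⊆ shadowF (ferrers h μ) i j)
    (L : Fin n → ℕ × ℕ) (hLinj : Function.Injective L)
    (hLmem : ∀ m, L m ∈ ferrers h μ \ S) (hLsurj : ∀ z ∈ ferrers h μ \ S, ∃ m, L m = z)
    (P₂ : MvPolynomial (Fin n ⊕ Fin n) ℚ) (d₂ : ℕ) (hd₂ : P₂.totalDegree ≤ d₂)
    (hvan₂ : ∀ T : Fin n → ℕ × ℕ, Function.Injective T → (∀ m, T m ∈ ferrers h μ) →
      (∀ c ∈ ferrers h μ, c ∉ Set.range T → c ∈ shadowF (ferrers h μ) i j) →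
      MvPolynomial.eval (Sum.elim (fun m : Fin n => α (T m).1) (fun m : Fin n => β (T m).2)) P₂
        = 0) :
    pr (homogeneousComponent d₂ P₂) (deltaOfList n L) = 0 := by
  classical
  have hmemL : ∀ m, L m ∈ ferrers h μ := fun m => (Finset.mem_sdiff.1 (hLmem m)).1
  have hph : ∀ m, (L m).1 < h := fun m => (mem_ferrers.1 (hmemL m)).1
  have hqw : ∀ m, (L m).2 < μ 0 := fun m => (mem_ferrers.1 (hmemL m)).2.1
  set D := ∑ m : Fin n, ((L m).1 + (L m).2) with hD
  set Aexp : Equiv.Perm (Fin n) → ((Fin n ⊕ Fin n) →₀ ℕ) := fun s =>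
    Finsupp.equivFunOnFinite.symm
      (Sum.elim (fun m => (L (s⁻¹ m)).1) (fun m => (L (s⁻¹ m)).2)) with hAexp
  have hAl : ∀ (s : Equiv.Perm (Fin n)) m, Aexp s (Sum.inl m) = (L (s⁻¹ m)).1 := by
    intro s m
    simp [hAexp]
  have hAr : ∀ (s : Equiv.Perm (Fin n)) m, Aexp s (Sum.inr m) = (L (s⁻¹ m)).2 := by
    intro s m
    simp [hAexp]
  -- determinant expansion
  have detM : deltaOfList n L = ∑ s : Equiv.Perm (Fin n),
      ((Equiv.Perm.sign s : ℤ) : MvPolynomial (Fin n ⊕ Fin n) ℚ) * monomial (Aexp s) 1 := by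
    rw [deltaOfList, Matrix.det_apply']
    apply Finset.sum_congr rfl
    intro s _
    congr 1
    have hterm : ∀ i' : Fin n, (Matrix.of fun i' j' : Fin n =>
        X (Sum.inl i') ^ (L j').1 * X (Sum.inr i') ^ (L j').2) (s i') i'
        = monomial (Finsupp.single (Sum.inl (s i')) (L i').1
            + Finsupp.single (Sum.inr (s i')) (L i').2) (1 : ℚ) := by
      intro i'
      rw [Matrix.of_apply, X_pow_eq_monomial, X_pow_eq_monomial, monomial_mul, one_mul]
    rw [Finset.prod_congr rfl fun i' _ => hterm i', prod_monomial_one]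
    have hexp : (∑ m : Fin n, (Finsupp.single (Sum.inl (s m)) (L m).1
        + Finsupp.single (Sum.inr (s m)) (L m).2)) = Aexp s := by
      ext v
      rw [Finsupp.finset_sum_apply]
      rcases v with m | m
      · rw [hAl]
        rw [Finset.sum_eq_single (s⁻¹ m)]
        · simp [Finsupp.single_apply, Equiv.Perm.coe_inv]
        · intro b _ hb
          have hne : s b ≠ m := fun h1 => hb (by rw [← h1]; simp)
          simp [Finsupp.single_apply, hne]
        · intro habs
          exact absurd (Finset.mem_univ _) habs
      · rw [hAr]
        rw [Finset.sum_eq_single (s⁻¹ m)]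
        · simp [Finsupp.single_apply, Equiv.Perm.coe_inv]
        · intro b _ hb
          have hne : s b ≠ m := fun h1 => hb (by rw [← h1]; simp)
          simp [Finsupp.single_apply, hne]
        · intro habs
          exact absurd (Finset.mem_univ _) habs
    rw [hexp]
  have coeffΔ : ∀ a, (deltaOfList n L).coeff a
      = ∑ s : Equiv.Perm (Fin n),
          (if Aexp s = a then ((Equiv.Perm.sign s : ℤ) : ℚ) else 0) := by
    intro a
    rw [detM, coeff_sum]
    apply Finset.sum_congr rfl
    intro s _
    have hc : ((Equiv.Perm.sign s : ℤ) : MvPolynomial (Fin n ⊕ Fin n) ℚ) * monomial (Aexp s) 1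
        = monomial (Aexp s) ((Equiv.Perm.sign s : ℤ) : ℚ) := by
      have : ((Equiv.Perm.sign s : ℤ) : MvPolynomial (Fin n ⊕ Fin n) ℚ)
          = C ((Equiv.Perm.sign s : ℤ) : ℚ) := by
        push_cast
        simp
      rw [this, C_mul_monomial, mul_one]
    rw [hc, coeff_monomial]
  have hAdeg : ∀ s : Equiv.Perm (Fin n), (Aexp s).degree = D := by
    intro s
    have h1 : (Aexp s).degree
        = (∑ m : Fin n, (Aexp s) (Sum.inl m)) + (∑ m : Fin n, (Aexp s) (Sum.inr m)) := by
      rw [degree_eq_univ_sum, Fintype.sum_sum_type]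
    rw [h1, Finset.sum_congr rfl (fun m (_ : m ∈ Finset.univ) => hAl s m),
      Finset.sum_congr rfl (fun m (_ : m ∈ Finset.univ) => hAr s m), ← Finset.sum_add_distrib]
    exact Equiv.sum_comp (s⁻¹ : Equiv.Perm (Fin n)) (fun m => (L m).1 + (L m).2)
  have hsuppΔ : ∀ a ∈ (deltaOfList n L).support, a.degree = D := by
    intro a haS
    by_contra hne
    apply MvPolynomial.mem_support_iff.1 haS
    rw [coeffΔ a]
    apply Finset.sum_eq_zero
    intro s _
    rw [if_neg (fun hEq => hne (by rw [← hEq]; exact hAdeg s))]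
  set Cf : ℚ := ∏ m : Fin n, (((L m).1.factorial : ℚ) * ((L m).2.factorial : ℚ)) with hCf
  have hAfct : ∀ s : Equiv.Perm (Fin n), fct (Aexp s) = Cf := by
    intro s
    unfold fct
    rw [Fintype.prod_sum_type]
    have h1 : (∏ m : Fin n, (((Aexp s (Sum.inl m)).factorial : ℚ)))
        = ∏ m : Fin n, (((L m).1.factorial : ℚ)) := by
      rw [Finset.prod_congr rfl fun m _ => by rw [hAl s m]]
      exact Equiv.prod_comp (s⁻¹ : Equiv.Perm (Fin n)) (fun m => (((L m).1.factorial : ℚ)))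
    have h2 : (∏ m : Fin n, (((Aexp s (Sum.inr m)).factorial : ℚ)))
        = ∏ m : Fin n, (((L m).2.factorial : ℚ)) := by
      rw [Finset.prod_congr rfl fun m _ => by rw [hAr s m]]
      exact Equiv.prod_comp (s⁻¹ : Equiv.Perm (Fin n)) (fun m => (((L m).2.factorial : ℚ)))
    rw [h1, h2, hCf, ← Finset.prod_mul_distrib]
  set G1 := Gm α h with hG1
  set G2 := Gm β (μ 0) with hG2
  set pF : Fin n → Fin h := fun m => ⟨(L m).1, hph m⟩ with hpF
  set qF : Fin n → Fin (μ 0) := fun m => ⟨(L m).2, hqw m⟩ with hqF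
  set w : (Fin n → Fin h × Fin (μ 0)) → ℚ := fun g => Cf * ∑ t : Equiv.Perm (Fin n),
      ((Equiv.Perm.sign t : ℤ) : ℚ) * ∏ m : Fin n,
        (G1 (pF (t m)) (g m).1 * G2 (qF (t m)) (g m).2) with hw
  set ρ : (Fin n → Fin h × Fin (μ 0)) → (Fin n ⊕ Fin n) → ℚ := fun g =>
      Sum.elim (fun m => α ((g m).1 : ℕ)) (fun m => β ((g m).2 : ℕ)) with hρ
  -- the key identity on monomials
  have idmono : ∀ a : (Fin n ⊕ Fin n) →₀ ℕ, a.degree ≤ D →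
      (∑ g : Fin n → Fin h × Fin (μ 0), w g * ∏ v : Fin n ⊕ Fin n, (ρ g v) ^ (a v))
        = (deltaOfList n L).coeff a * fct a := by
    intro a ha
    set ft : Equiv.Perm (Fin n) → Fin n → Fin h × Fin (μ 0) → ℚ := fun t m z =>
      (G1 (pF (t m)) z.1 * α (z.1 : ℕ) ^ (a (Sum.inl m)))
        * (G2 (qF (t m)) z.2 * β (z.2 : ℕ) ^ (a (Sum.inr m))) with hft
    have hprod : ∀ g : Fin n → Fin h × Fin (μ 0),
        (∏ v : Fin n ⊕ Fin n, (ρ g v) ^ (a v))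
          = (∏ m : Fin n, α ((g m).1 : ℕ) ^ (a (Sum.inl m)))
            * (∏ m : Fin n, β ((g m).2 : ℕ) ^ (a (Sum.inr m))) := by
      intro g
      rw [Fintype.prod_sum_type]
      rfl
    have hper : ∀ g, w g * ∏ v : Fin n ⊕ Fin n, (ρ g v) ^ (a v)
        = ∑ t : Equiv.Perm (Fin n), Cf * (((Equiv.Perm.sign t : ℤ) : ℚ)
            * ∏ m : Fin n, ft t m (g m)) := by
      intro g
      rw [hprod g]
      simp only [hw]
      rw [mul_assoc, Finset.sum_mul, Finset.mul_sum]
      apply Finset.sum_congr rfl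
      intro t _
      rw [mul_assoc]
      congr 1
      congr 1
      rw [← Finset.prod_mul_distrib, ← Finset.prod_mul_distrib]
      apply Finset.prod_congr rfl
      intro m _
      simp only [hft]
      ring
    have hz : ∀ (t : Equiv.Perm (Fin n)) (m : Fin n),
        (∑ z : Fin h × Fin (μ 0), ft t m z)
          = Um α h (a (Sum.inl m)) (pF (t m)) * Um β (μ 0) (a (Sum.inr m)) (qF (t m)) := by
      intro t m
      rw [Fintype.sum_prod_type]
      unfold Um
      rw [Finset.sum_mul_sum]
    have hmatch : ∀ t : Equiv.Perm (Fin n),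
        (∏ m : Fin n, (Um α h (a (Sum.inl m)) (pF (t m))
            * Um β (μ 0) (a (Sum.inr m)) (qF (t m))))
          = if Aexp t⁻¹ = a then 1 else 0 := by
      intro t
      by_cases hm : ∀ m : Fin n, (L (t m)).1 = a (Sum.inl m) ∧ (L (t m)).2 = a (Sum.inr m)
      · have hAeq : Aexp t⁻¹ = a := by
          ext v
          rcases v with m | m
          · rw [hAl, inv_inv]
            exact (hm m).1
          · rw [hAr, inv_inv]
            exact (hm m).2
        rw [if_pos hAeq]
        apply Finset.prod_eq_one
        intro m _
        rw [Um_one α h hα (show ((pF (t m) : ℕ)) = a (Sum.inl m) from (hm m).1),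
          Um_one β (μ 0) hβ (show ((qF (t m) : ℕ)) = a (Sum.inr m) from (hm m).2), mul_one]
      · have hAne : ¬ (Aexp t⁻¹ = a) := by
          intro hEq
          apply hm
          intro m
          constructor
          · rw [← hEq, hAl, inv_inv]
          · rw [← hEq, hAr, inv_inv]
        rw [if_neg hAne]
        by_cases hle : ∀ m : Fin n, (L (t m)).1 ≤ a (Sum.inl m) ∧ (L (t m)).2 ≤ a (Sum.inr m)
        · exfalso
          apply hm
          have hsum1 : (∑ m : Fin n, ((L (t m)).1 + (L (t m)).2)) = D :=
            Equiv.sum_comp (t : Equiv.Perm (Fin n)) (fun m => (L m).1 + (L m).2)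
          have hsum2 : a.degree = ∑ m : Fin n, (a (Sum.inl m) + a (Sum.inr m)) := by
            rw [degree_eq_univ_sum, Fintype.sum_sum_type, ← Finset.sum_add_distrib]
          have hle2 : ∀ m ∈ Finset.univ (α := Fin n),
              (L (t m)).1 + (L (t m)).2 ≤ a (Sum.inl m) + a (Sum.inr m) := by
            intro m _
            have := hle m
            omega
          have heq : (∑ m : Fin n, ((L (t m)).1 + (L (t m)).2))
              = ∑ m : Fin n, (a (Sum.inl m) + a (Sum.inr m)) := by
            have hle3 := Finset.sum_le_sum hle2
            omega
          have hall := (Finset.sum_eq_sum_iff_of_le hle2).1 heq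
          intro m
          have h4 := hall m (Finset.mem_univ m)
          have h5 := hle m
          omega
        · push_neg at hle
          obtain ⟨m, hmv⟩ := hle
          apply Finset.prod_eq_zero (Finset.mem_univ m)
          by_cases hc1 : (L (t m)).1 ≤ a (Sum.inl m)
          · have hc2 := hmv hc1
            rw [Um_zero β (μ 0) hβ (show a (Sum.inr m) < ((qF (t m) : ℕ)) from hc2), mul_zero]
          · rw [Um_zero α h hα (show a (Sum.inl m) < ((pF (t m) : ℕ)) by
                push_neg at hc1
                exact hc1), zero_mul]
    calc (∑ g : Fin n → Fin h × Fin (μ 0), w g * ∏ v : Fin n ⊕ Fin n, (ρ g v) ^ (a v))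
        = ∑ t : Equiv.Perm (Fin n), Cf * (((Equiv.Perm.sign t : ℤ) : ℚ)
            * ∑ g : Fin n → Fin h × Fin (μ 0), ∏ m : Fin n, ft t m (g m)) := by
          rw [Finset.sum_congr rfl (fun g _ => hper g), Finset.sum_comm]
          apply Finset.sum_congr rfl
          intro t _
          rw [← Finset.mul_sum, ← Finset.mul_sum]
      _ = ∑ t : Equiv.Perm (Fin n), Cf * (((Equiv.Perm.sign t : ℤ) : ℚ)
            * (if Aexp t⁻¹ = a then 1 else 0)) := by
          apply Finset.sum_congr rfl
          intro t _
          rw [← Fintype.prod_sum (ft t), Finset.prod_congr rfl (fun m _ => hz t m), hmatch t]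
      _ = ∑ s : Equiv.Perm (Fin n), Cf * (((Equiv.Perm.sign s : ℤ) : ℚ)
            * (if Aexp s = a then 1 else 0)) := by
          rw [← Equiv.sum_comp (Equiv.inv (Equiv.Perm (Fin n)))
            (fun s => Cf * (((Equiv.Perm.sign s : ℤ) : ℚ) * (if Aexp s = a then 1 else 0)))]
          apply Finset.sum_congr rfl
          intro t _
          simp only [Equiv.inv_apply]
          rw [Equiv.Perm.sign_inv]
      _ = (deltaOfList n L).coeff a * fct a := by
          rw [coeffΔ a, Finset.sum_mul]
          apply Finset.sum_congr rfl
          intro s _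
          by_cases hs : Aexp s = a
          · rw [if_pos hs, if_pos hs, mul_one, ← hs, hAfct s]
            ring
          · rw [if_neg hs, if_neg hs]
            ring
  -- the evaluation identity
  have lam : ∀ R : MvPolynomial (Fin n ⊕ Fin n) ℚ, R.totalDegree ≤ D →
      pr R (deltaOfList n L)
        = ∑ g : Fin n → Fin h × Fin (μ 0), w g * eval (ρ g) R := by
    intro R hR
    have hev : ∀ g, eval (ρ g) R
        = ∑ a ∈ R.support, R.coeff a * ∏ v : Fin n ⊕ Fin n, (ρ g v) ^ (a v) := by
      intro g
      rw [eval_eq]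
      apply Finset.sum_congr rfl
      intro a _
      congr 1
      exact Finset.prod_subset (Finset.subset_univ _) (by
        intro v _ hv
        rw [Finsupp.notMem_support_iff.1 hv, pow_zero])
    have e1 : pr R (deltaOfList n L)
        = ∑ a ∈ (deltaOfList n L).support ∪ R.support,
            R.coeff a * (deltaOfList n L).coeff a * fct a :=
      Finset.sum_subset Finset.subset_union_left (fun a _ ha => by
        rw [MvPolynomial.notMem_support_iff.1 ha, mul_zero, zero_mul])
    have e2 : (∑ a ∈ (deltaOfList n L).support ∪ R.support,
            R.coeff a * (deltaOfList n L).coeff a * fct a)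
        = ∑ a ∈ R.support, R.coeff a * (deltaOfList n L).coeff a * fct a :=
      (Finset.sum_subset Finset.subset_union_right (fun a _ ha => by
        rw [MvPolynomial.notMem_support_iff.1 ha, zero_mul, zero_mul])).symm
    rw [e1, e2]
    have e3 : ∀ a ∈ R.support, R.coeff a * (deltaOfList n L).coeff a * fct a
        = R.coeff a * ∑ g : Fin n → Fin h × Fin (μ 0),
            w g * ∏ v : Fin n ⊕ Fin n, (ρ g v) ^ (a v) := by
      intro a haR
      rw [mul_assoc, ← idmono a (by
        have h1 := MvPolynomial.le_totalDegree haR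
        rw [sum_eq_degree] at h1
        omega)]
    rw [Finset.sum_congr rfl e3, Finset.sum_congr rfl
      (fun a (_ : a ∈ R.support) => Finset.mul_sum _ _ _), Finset.sum_comm]
    apply Finset.sum_congr rfl
    intro g _
    rw [hev g, Finset.mul_sum]
    apply Finset.sum_congr rfl
    intro a _
    ring
  -- vanishing of each term
  have hzero : ∀ g : Fin n → Fin h × Fin (μ 0), w g * eval (ρ g) P₂ = 0 := by
    intro g
    set T : Fin n → ℕ × ℕ := fun m => (((g m).1 : ℕ), ((g m).2 : ℕ)) with hT
    by_cases hinj : Function.Injective T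
    · by_cases hcompl : (∀ m, T m ∈ ferrers h μ)
          ∧ ∀ c ∈ ferrers h μ, c ∉ Set.range T → c ∈ shadowF (ferrers h μ) i j
      · have hev0 : eval (ρ g) P₂ = 0 := by
          have hfun : ρ g = Sum.elim (fun m : Fin n => α (T m).1) (fun m : Fin n => β (T m).2) := by
            funext v
            rcases v with m | m <;> rfl
          rw [hfun]
          exact hvan₂ T hinj hcompl.1 hcompl.2
        rw [hev0, mul_zero]
      · have hw0 : w g = 0 := by
          simp only [hw]
          have hsum0 : (∑ t : Equiv.Perm (Fin n), ((Equiv.Perm.sign t : ℤ) : ℚ) *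
              ∏ m : Fin n, (G1 (pF (t m)) (g m).1 * G2 (qF (t m)) (g m).2)) = 0 := by
            apply Finset.sum_eq_zero
            intro t _
            have hPP : (∏ m : Fin n, (G1 (pF (t m)) (g m).1 * G2 (qF (t m)) (g m).2)) = 0 := by
              by_contra hne
              have hfac : ∀ m : Fin n, G1 (pF (t m)) (g m).1 ≠ 0 ∧ G2 (qF (t m)) (g m).2 ≠ 0 := by
                intro m
                constructor
                · intro h0
                  exact hne (Finset.prod_eq_zero (Finset.mem_univ m) (by rw [h0, zero_mul]))
                · intro h0
                  exact hne (Finset.prod_eq_zero (Finset.mem_univ m) (by rw [h0, mul_zero]))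
              have hdom : ∀ m : Fin n, (T m).1 ≤ (L (t m)).1 ∧ (T m).2 ≤ (L (t m)).2 := by
                intro m
                constructor
                · by_contra hgt
                  push_neg at hgt
                  exact (hfac m).1 (Gm_tri α h hα (pF (t m)) (g m).1 (by
                    simp only [hpF]
                    exact hgt))
                · by_contra hgt
                  push_neg at hgt
                  exact (hfac m).2 (Gm_tri β (μ 0) hβ (qF (t m)) (g m).2 (by
                    simp only [hqF]
                    exact hgt))
              have hTmem : ∀ m, T m ∈ ferrers h μ := fun m =>
                ferrers_dc hanti (hmemL (t m)) (hdom m).1 (hdom m).2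
              apply hcompl
              refine ⟨hTmem, ?_⟩
              intro c₀ hc₀F hc₀r
              rw [shadowF, Finset.mem_filter]
              refine ⟨hc₀F, ?_, ?_⟩
              · by_contra hlt
                push_neg at hlt
                set Row := (ferrers h μ).filter (fun z => z.1 < i) with hRowdef
                have hc₀Row : c₀ ∈ Row := Finset.mem_filter.2 ⟨hc₀F, hlt⟩
                have hRowD : ∀ z ∈ Row, z ∈ ferrers h μ \ S := by
                  intro z hz
                  rw [Finset.mem_sdiff]
                  refine ⟨(Finset.mem_filter.1 hz).1, ?_⟩
                  intro hzS
                  have h6 := hSsub hzS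
                  rw [shadowF, Finset.mem_filter] at h6
                  have h7 := (Finset.mem_filter.1 hz).2
                  omega
                obtain ⟨m₀, _⟩ := hLsurj c₀ (hRowD c₀ hc₀Row)
                set idx : ℕ × ℕ → Fin n := fun z =>
                  if hz : z ∈ ferrers h μ \ S then (hLsurj z hz).choose else m₀ with hidx
                have hidx_spec : ∀ z ∈ ferrers h μ \ S, L (idx z) = z := by
                  intro z hz
                  simp only [hidx]
                  rw [dif_pos hz]
                  exact (hLsurj z hz).choose_spec
                set φ : ℕ × ℕ → ℕ × ℕ := fun z => T (t⁻¹ (idx z)) with hφ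
                have hφle : ∀ z ∈ Row, (φ z).1 ≤ z.1 ∧ (φ z).2 ≤ z.2 := by
                  intro z hz
                  have h8 := hdom (t⁻¹ (idx z))
                  rw [show t (t⁻¹ (idx z)) = idx z from Equiv.Perm.eq_inv_iff_eq.1 rfl] at h8
                  rw [hidx_spec z (hRowD z hz)] at h8
                  exact h8
                have hφmem : ∀ z ∈ Row, φ z ∈ Row ∩ Finset.image T Finset.univ := by
                  intro z hz
                  rw [Finset.mem_inter]
                  constructor
                  · rw [hRowdef, Finset.mem_filter]
                    refine ⟨hTmem _, ?_⟩
                    have h9 := (hφle z hz).1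
                    have h10 := (Finset.mem_filter.1 hz).2
                    omega
                  · exact Finset.mem_image.2 ⟨t⁻¹ (idx z), Finset.mem_univ _, rfl⟩
                have hφinj : Set.InjOn φ Row := by
                  intro z1 hz1 z2 hz2 hEq
                  simp only [hφ] at hEq
                  have h11 := hinj hEq
                  have h12 : idx z1 = idx z2 := (Equiv.injective _) h11
                  rw [← hidx_spec z1 (hRowD z1 hz1), ← hidx_spec z2 (hRowD z2 hz2), h12]
                have hcard := Finset.card_le_card_of_injOn φ hφmem hφinj
                have hEqset := Finset.eq_of_subset_of_card_le Finset.inter_subset_left hcard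
                have hc₀img : c₀ ∈ Finset.image T Finset.univ := by
                  have h13 : c₀ ∈ Row ∩ Finset.image T Finset.univ := by
                    rw [hEqset]
                    exact hc₀Row
                  exact (Finset.mem_inter.1 h13).2
                obtain ⟨m', _, hm'⟩ := Finset.mem_image.1 hc₀img
                exact hc₀r ⟨m', hm'⟩
              · by_contra hlt
                push_neg at hlt
                set Row := (ferrers h μ).filter (fun z => z.2 < j) with hRowdef
                have hc₀Row : c₀ ∈ Row := Finset.mem_filter.2 ⟨hc₀F, hlt⟩
                have hRowD : ∀ z ∈ Row, z ∈ ferrers h μ \ S := by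
                  intro z hz
                  rw [Finset.mem_sdiff]
                  refine ⟨(Finset.mem_filter.1 hz).1, ?_⟩
                  intro hzS
                  have h6 := hSsub hzS
                  rw [shadowF, Finset.mem_filter] at h6
                  have h7 := (Finset.mem_filter.1 hz).2
                  omega
                obtain ⟨m₀, _⟩ := hLsurj c₀ (hRowD c₀ hc₀Row)
                set idx : ℕ × ℕ → Fin n := fun z =>
                  if hz : z ∈ ferrers h μ \ S then (hLsurj z hz).choose else m₀ with hidx
                have hidx_spec : ∀ z ∈ ferrers h μ \ S, L (idx z) = z := by
                  intro z hz
                  simp only [hidx]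
                  rw [dif_pos hz]
                  exact (hLsurj z hz).choose_spec
                set φ : ℕ × ℕ → ℕ × ℕ := fun z => T (t⁻¹ (idx z)) with hφ
                have hφle : ∀ z ∈ Row, (φ z).1 ≤ z.1 ∧ (φ z).2 ≤ z.2 := by
                  intro z hz
                  have h8 := hdom (t⁻¹ (idx z))
                  rw [show t (t⁻¹ (idx z)) = idx z from Equiv.Perm.eq_inv_iff_eq.1 rfl] at h8
                  rw [hidx_spec z (hRowD z hz)] at h8
                  exact h8
                have hφmem : ∀ z ∈ Row, φ z ∈ Row ∩ Finset.image T Finset.univ := by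
                  intro z hz
                  rw [Finset.mem_inter]
                  constructor
                  · rw [hRowdef, Finset.mem_filter]
                    refine ⟨hTmem _, ?_⟩
                    have h9 := (hφle z hz).2
                    have h10 := (Finset.mem_filter.1 hz).2
                    omega
                  · exact Finset.mem_image.2 ⟨t⁻¹ (idx z), Finset.mem_univ _, rfl⟩
                have hφinj : Set.InjOn φ Row := by
                  intro z1 hz1 z2 hz2 hEq
                  simp only [hφ] at hEq
                  have h11 := hinj hEq
                  have h12 : idx z1 = idx z2 := (Equiv.injective _) h11
                  rw [← hidx_spec z1 (hRowD z1 hz1), ← hidx_spec z2 (hRowD z2 hz2), h12]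
                have hcard := Finset.card_le_card_of_injOn φ hφmem hφinj
                have hEqset := Finset.eq_of_subset_of_card_le Finset.inter_subset_left hcard
                have hc₀img : c₀ ∈ Finset.image T Finset.univ := by
                  have h13 : c₀ ∈ Row ∩ Finset.image T Finset.univ := by
                    rw [hEqset]
                    exact hc₀Row
                  exact (Finset.mem_inter.1 h13).2
                obtain ⟨m', _, hm'⟩ := Finset.mem_image.1 hc₀img
                exact hc₀r ⟨m', hm'⟩
            rw [hPP, mul_zero]
          rw [hsum0, mul_zero]
        rw [hw0, zero_mul]
    · have hw0 : w g = 0 := by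
        rw [Function.not_injective_iff] at hinj
        obtain ⟨m1, m2, hTeq, hne⟩ := hinj
        have hgeq : g m1 = g m2 := by
          have h1 : (g m1).1 = (g m2).1 := Fin.ext (congrArg Prod.fst hTeq)
          have h2 : (g m1).2 = (g m2).2 := Fin.ext (congrArg Prod.snd hTeq)
          exact Prod.ext h1 h2
        simp only [hw]
        have hdet : (∑ t : Equiv.Perm (Fin n), ((Equiv.Perm.sign t : ℤ) : ℚ) *
            ∏ m : Fin n, (G1 (pF (t m)) (g m).1 * G2 (qF (t m)) (g m).2))
            = Matrix.det (Matrix.of fun u v : Fin n =>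
                G1 (pF u) (g v).1 * G2 (qF u) (g v).2) := by
          rw [Matrix.det_apply']
          apply Finset.sum_congr rfl
          intro t _
          simp [Matrix.of_apply]
        have hdz : Matrix.det (Matrix.of fun u v : Fin n =>
            G1 (pF u) (g v).1 * G2 (qF u) (g v).2) = 0 := by
          apply Matrix.det_zero_of_column_eq hne
          intro u
          rw [Matrix.of_apply, Matrix.of_apply, hgeq]
        rw [hdet, hdz, mul_zero]
      rw [hw0, zero_mul]
  -- conclusion
  unfold pr
  by_cases hDeq : d₂ = D
  · have hcongr : ∀ a ∈ (deltaOfList n L).support,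
        (homogeneousComponent d₂ P₂).coeff a * (deltaOfList n L).coeff a * fct a
          = P₂.coeff a * (deltaOfList n L).coeff a * fct a := by
      intro a haS
      rw [coeff_homogeneousComponent, if_pos (by rw [hsuppΔ a haS, hDeq])]
    rw [Finset.sum_congr rfl hcongr]
    calc (∑ a ∈ (deltaOfList n L).support,
            P₂.coeff a * (deltaOfList n L).coeff a * fct a)
        = pr P₂ (deltaOfList n L) := rfl
      _ = ∑ g : Fin n → Fin h × Fin (μ 0), w g * eval (ρ g) P₂ := lam P₂ (by omega)
      _ = 0 := Finset.sum_eq_zero fun g _ => hzero g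
  · apply Finset.sum_eq_zero
    intro a haS
    rw [coeff_homogeneousComponent,
      if_neg (by rw [hsuppΔ a haS]; exact fun hEq => hDeq hEq.symm), zero_mul, zero_mul]

theorem main (n k h i j : ℕ) (μ : ℕ → ℕ) (hanti : Antitone μ)
    (hcard : (ferrers h μ).card = n + k)
    (α β : ℕ → ℚ) (hα : Set.InjOn α (Set.Iio h)) (hβ : Set.InjOn β (Set.Iio (μ 0)))
    (S : Finset (ℕ × ℕ)) (hS : S ∈ Finset.powersetCard k (shadowF (ferrers h μ) i j))
    (P₂ : MvPolynomial (Fin n ⊕ Fin n) ℚ) (d₂ : ℕ) (hd₂ : P₂.totalDegree ≤ d₂)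
    (hvan₂ : ∀ T : Fin n → ℕ × ℕ, Function.Injective T → (∀ m, T m ∈ ferrers h μ) →
      (∀ c ∈ ferrers h μ, c ∉ Set.range T → c ∈ shadowF (ferrers h μ) i j) →
      MvPolynomial.eval (Sum.elim (fun m : Fin n => α (T m).1) (fun m : Fin n => β (T m).2)) P₂
        = 0) :
    pr (homogeneousComponent d₂ P₂) (deltaOfFinset n (ferrers h μ \ S)) = 0 := by
  obtain ⟨hSsub, hScard⟩ := Finset.mem_powersetCard.1 hS
  have hSF : S ⊆ ferrers h μ := hSsub.trans (Finset.filter_subset _ _)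
  have hDcard : (ferrers h μ \ S).card = n := by
    rw [Finset.card_sdiff_of_subset hSF, hcard, hScard]
    omega
  have hlen : ((ferrers h μ \ S).sort plexLE).length = n := by
    rw [Finset.length_sort, hDcard]
  rw [deltaOfFinset, dif_pos hDcard]
  apply mainCore n h i j μ hanti α β hα hβ S hSsub _ ?hinj ?hmem ?hsurj P₂ d₂ hd₂ hvan₂
  case hinj =>
    intro m m' heq
    have hnd := Finset.sort_nodup (ferrers h μ \ S) plexLE
    have h2 := (List.Nodup.get_inj_iff hnd).1 heq
    have h3 := congrArg Fin.val h2
    exact Fin.val_injective h3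
  case hmem =>
    intro m
    exact (Finset.mem_sort plexLE).1 (List.get_mem _ _)
  case hsurj =>
    intro z hz
    have hzs : z ∈ (ferrers h μ \ S).sort plexLE := (Finset.mem_sort plexLE).2 hz
    obtain ⟨idx, hidx⟩ := List.mem_iff_get.1 hzs
    refine ⟨⟨idx.1, by rw [← hlen]; exact idx.2⟩, ?_⟩
    rw [← hidx]

end S9
end Main9

/-- The inclusion `I^k ⊆ 𝓘` (orbit construction, two alphabets): if `P` vanishes on the
orbit point of every filling of `n` of the cells of `μ` by `1,…,n` whose `k` empty cells
lie in the shadow of `(i,j)`, then `gr(P)(∂)` annihilates `M^k_{i,j}(X,Y)`.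
Here `μ` is a partition of `n + k` with `h` rows and largest part `μ 0`, a filling is an
injective map `T : Fin n → ℕ × ℕ` with values in `μ` whose complement in `μ` lies in
the shadow of `(i,j)`, and the orbit point of `T` is given by `aₘ = α (row of m)`,
`bₘ = β (column of m)` for pairwise distinct `α`'s and `β`'s. -/
theorem statement9 (n k h i j : ℕ) (μ : ℕ → ℕ)
    (hanti : Antitone μ) (hpos : ∀ r, r < h → 0 < μ r) (hzero : ∀ r, h ≤ r → μ r = 0)
    (hcard : (ferrers h μ).card = n + k) (hij : (i, j) ∈ ferrers h μ)
    (α β : ℕ → ℚ) (hα : Set.InjOn α (Set.Iio h)) (hβ : Set.InjOn β (Set.Iio (μ 0)))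
    (P : MvPolynomial (Fin n ⊕ Fin n) ℚ)
    (hvan : ∀ T : Fin n → ℕ × ℕ, Function.Injective T →
      (∀ m, T m ∈ ferrers h μ) →
      (∀ c ∈ ferrers h μ, c ∉ Set.range T → c ∈ shadowF (ferrers h μ) i j) →
      MvPolynomial.eval
        (Sum.elim (fun m : Fin n => α (T m).1) (fun m : Fin n => β (T m).2)) P = 0) :
    ∀ Q ∈ Mk n k (ferrers h μ) i j,
      applyDiff (MvPolynomial.homogeneousComponent P.totalDegree P) Q = 0 := by
  intro Q hQ
  set W := MvPolynomial.homogeneousComponent P.totalDegree P with hW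
  let Lmap : MvPolynomial (Fin n ⊕ Fin n) ℚ →ₗ[ℚ] MvPolynomial (Fin n ⊕ Fin n) ℚ :=
    { toFun := fun R => applyDiff W R
      map_add' := S9.applyDiff_add W
      map_smul' := fun r R => S9.applyDiff_smul W r R }
  suffices hle : Mk n k (ferrers h μ) i j ≤ LinearMap.ker Lmap by
    exact LinearMap.mem_ker.1 (hle hQ)
  rw [Mk]
  apply iSup_le
  intro S
  apply iSup_le
  intro hS
  rw [derivSpan, Submodule.span_le]
  rintro R ⟨m, rfl⟩
  show applyDiff W (monDiff m (deltaOfFinset n (ferrers h μ \ S))) = 0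
  apply S9.applyDiff_eq_zero_of_pr
  intro c
  rw [S9.pr_monDiff, ← mul_assoc, MvPolynomial.monomial_mul, one_mul, hW, S9.hc_shift]
  apply S9.main n k h i j μ hanti hcard α β hα hβ S hS
  · calc (MvPolynomial.monomial (m + c) (1 : ℚ) * P).totalDegree
        ≤ (MvPolynomial.monomial (m + c) (1 : ℚ)).totalDegree + P.totalDegree :=
          MvPolynomial.totalDegree_mul _ _
      _ ≤ P.totalDegree + (m + c).degree := by
          rw [MvPolynomial.totalDegree_monomial _ (one_ne_zero), S9.sum_eq_degree]
          omega
  · intro T hTinj hTmem hTcompl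
    rw [map_mul, hvan T hTinj hTmem hTcompl, mul_zero]
end
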